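/- arXiv:1411.4193 — 4 statements merged into one kernel-verified Lean document; each statement's English description precedes it below -/
import Mathlib

section
/- Let s₀ ≤ A < B and define c^{A,B}(x) := E[ 1_{H_A ≤ T} · (S_{T∧H_B} − x)⁺ ] for x ∈ ℝ. Then c^{A,B}(x) = 0 for all x ≥ B, and the left derivative of c^{A,B} at B equals −ℙ(H_B ≤ T). -/
open MeasureTheory Set Filter

noncomputable section

/-- The running maximum `M_T(ω) = sup_{t ∈ [0,T]} S_t(ω)`. -/
def runMax {Ω : Type} (S : ℝ → Ω → ℝ) (T : ℝ) (ω : Ω) : ℝ :=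
  ⨆ t : Icc (0:ℝ) T, S t ω

/-- The stopped value `S_{T ∧ H_B}(ω)`, where `H_B` is the first hitting time of
`[B, ∞)` by `S` during the time interval `[0,T]` (`= S_T(ω)` if `B` is not reached). -/
def stopVal {Ω : Type} (S : ℝ → Ω → ℝ) (B T : ℝ) (ω : Ω) : ℝ :=
  S (hittingBtwn S (Ici B) 0 T ω) ω

/-- The event `{H_B ≤ T}`: the level `B` is reached by `S` during `[0,T]`. -/
def hitEvent {Ω : Type} (S : ℝ → Ω → ℝ) (B T : ℝ) : Set Ω :=
  {ω | ∃ t ∈ Icc (0:ℝ) T, B ≤ S t ω}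

/-- `S` is an adapted martingale on the time interval `[0,T]` with continuous sample
paths, a.s. (strictly) positive values, and initial value `s₀`. -/
structure IsPosContMart {Ω : Type} [mΩ : MeasurableSpace Ω]
    (ℙ : Measure Ω) (ℱ : Filtration ℝ mΩ) (S : ℝ → Ω → ℝ) (s₀ T : ℝ) : Prop where
  adapted : ∀ t ∈ Icc (0:ℝ) T, StronglyMeasurable[ℱ t] (S t)
  integrable : ∀ t ∈ Icc (0:ℝ) T, Integrable (S t) ℙ
  mart : ∀ s t : ℝ, s ∈ Icc (0:ℝ) T → t ∈ Icc (0:ℝ) T → s ≤ t →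
    ℙ[S t|ℱ s] =ᵐ[ℙ] S s
  contPaths : ∀ ω, ContinuousOn (fun t => S t ω) (Icc (0:ℝ) T)
  pos : ∀ t ∈ Icc (0:ℝ) T, ∀ᵐ ω ∂ℙ, 0 < S t ω
  init : ∀ᵐ ω ∂ℙ, S 0 ω = s₀

lemma mem_hitEvent_iff {Ω : Type} {S : ℝ → Ω → ℝ} {B T : ℝ} {ω : Ω} :
    ω ∈ hitEvent S B T ↔ ∃ t ∈ Icc (0:ℝ) T, S t ω ∈ Ici B := by
  simp [hitEvent, mem_Ici]

lemma stopVal_of_not_hit {Ω : Type} {S : ℝ → Ω → ℝ} {B T : ℝ} {ω : Ω}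
    (h : ω ∉ hitEvent S B T) : stopVal S B T ω = S T ω := by
  have h' : ¬ ∃ t ∈ Icc (0:ℝ) T, S t ω ∈ Ici B := fun hc => h (mem_hitEvent_iff.2 hc)
  rw [stopVal, hittingBtwn, if_neg h']

lemma stopVal_of_hit {Ω : Type} {S : ℝ → Ω → ℝ} {B T : ℝ} {ω : Ω}
    (hcont : ContinuousOn (fun t => S t ω) (Icc (0:ℝ) T))
    (h0 : S 0 ω < B) (h : ω ∈ hitEvent S B T) : stopVal S B T ω = B := by
  set K : Set ℝ := Icc (0:ℝ) T ∩ {t | S t ω ∈ Ici B} with hK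
  have hKne : K.Nonempty := by
    obtain ⟨t, ht, hb⟩ := mem_hitEvent_iff.1 h
    exact ⟨t, ht, hb⟩
  have hKbdd : BddBelow K := ⟨0, fun t ht => ht.1.1⟩
  have hKclosed : IsClosed K :=
    hcont.preimage_isClosed_of_isClosed isClosed_Icc isClosed_Ici
  have hdef : stopVal S B T ω = S (sInf K) ω := by
    rw [stopVal, hittingBtwn, if_pos (mem_hitEvent_iff.1 h)]
  have hτK : sInf K ∈ K := hKclosed.csInf_mem hKne hKbdd
  set τ := sInf K with hτ
  have hτpos : 0 < τ := by
    rcases lt_or_eq_of_le hτK.1.1 with h' | h'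
    · exact h'
    · exfalso
      have : S 0 ω ∈ Ici B := by rw [h']; exact hτK.2
      exact absurd this (by simpa [mem_Ici, not_le] using h0)
  have hub : S τ ω ≤ B := by
    set C : Set ℝ := Icc (0:ℝ) T ∩ {t | S t ω ∈ Iic B} with hC
    have hCclosed : IsClosed C :=
      hcont.preimage_isClosed_of_isClosed isClosed_Icc isClosed_Iic
    have hsub : Ico (0:ℝ) τ ⊆ C := by
      intro t ht
      have htIcc : t ∈ Icc (0:ℝ) T := ⟨ht.1, le_trans ht.2.le hτK.1.2⟩
      refine ⟨htIcc, ?_⟩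
      by_contra hgt
      have : t ∈ K := ⟨htIcc, le_of_lt (by simpa [mem_Iic, not_le] using hgt)⟩
      exact absurd (csInf_le hKbdd this) (not_le.2 ht.2)
    have hclos : closure (Ico (0:ℝ) τ) ⊆ C := hCclosed.closure_subset_iff.2 hsub
    have : τ ∈ closure (Ico (0:ℝ) τ) := by
      rw [closure_Ico (ne_of_lt hτpos)]
      exact ⟨hτpos.le, le_rfl⟩
    exact (hclos this).2
  rw [hdef]
  exact le_antisymm hub hτK.2

lemma hitEvent_measurableSet {Ω : Type} [mΩ : MeasurableSpace Ω] (S : ℝ → Ω → ℝ) (C T : ℝ)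
    (hT : 0 < T) (hmeas : ∀ t ∈ Icc (0:ℝ) T, Measurable (S t))
    (hcont : ∀ ω, ContinuousOn (fun t => S t ω) (Icc (0:ℝ) T)) :
    MeasurableSet (hitEvent S C T) := by
  set D : Set ℝ := Icc (0:ℝ) T ∩ Set.range ((↑) : ℚ → ℝ) with hD
  have hDc : D.Countable := Set.Countable.mono inter_subset_right (Set.countable_range _)
  have key : hitEvent S C T = ⋂ n : ℕ, ⋃ q ∈ D, {ω | C - 1/(n+1) < S q ω} := by
    ext ω
    constructor
    · rintro ⟨t, ht, hB⟩
      refine mem_iInter.2 fun n => ?_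
      have hlt : C - 1/(n+1) < S t ω := by
        have : (0:ℝ) < 1/(n+1) := by positivity
        linarith
      have hev : {u : ℝ | C - 1/(n+1) < S u ω} ∈ nhdsWithin t (Icc (0:ℝ) T) :=
        (hcont ω t ht).preimage_mem_nhdsWithin (Ioi_mem_nhds hlt)
      obtain ⟨U, hUopen, htU, hUsub⟩ := mem_nhdsWithin.1 hev
      obtain ⟨δ, hδ, hball⟩ := Metric.isOpen_iff.1 hUopen t htU
      have hne : max 0 (t - δ) < min T (t + δ) := by
        rcases ht with ⟨ht0, htT⟩
        simp only [max_lt_iff, lt_min_iff]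
        constructor
        · exact ⟨hT, by linarith⟩
        · exact ⟨by linarith, by linarith⟩
      obtain ⟨q, hq1, hq2⟩ := exists_rat_btwn hne
      have hqIcc : (q:ℝ) ∈ Icc (0:ℝ) T :=
        ⟨le_of_lt (lt_of_le_of_lt (le_max_left _ _) hq1),
         le_of_lt (lt_of_lt_of_le hq2 (min_le_left _ _))⟩
      have hqU : (q:ℝ) ∈ U := by
        apply hball
        rw [Metric.mem_ball, Real.dist_eq, abs_lt]
        constructor
        · have := lt_of_le_of_lt (le_max_right _ _) hq1; linarith
        · have := lt_of_lt_of_le hq2 (min_le_right _ _); linarith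
      exact mem_biUnion ⟨hqIcc, ⟨q, rfl⟩⟩ (hUsub ⟨hqU, hqIcc⟩)
    · intro hω
      obtain ⟨t₀, ht₀, hmax⟩ :=
        isCompact_Icc.exists_isMaxOn (nonempty_Icc.2 hT.le) (hcont ω)
      refine ⟨t₀, ht₀, ?_⟩
      have hge : ∀ n : ℕ, C - 1/(n+1) ≤ S t₀ ω := by
        intro n
        have := mem_iInter.1 hω n
        obtain ⟨q, hqD, hq⟩ := mem_iUnion₂.1 this
        exact le_of_lt (lt_of_lt_of_le hq (hmax hqD.1))
      have htend : Tendsto (fun n : ℕ => C - 1/(n+1)) atTop (nhds C) := by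
        have := tendsto_one_div_add_atTop_nhds_zero_nat (𝕜 := ℝ)
        have h2 := (tendsto_const_nhds (x := C)).sub this
        simpa using h2
      exact le_of_tendsto' htend hge
  rw [key]
  exact MeasurableSet.iInter fun n =>
    MeasurableSet.biUnion hDc fun q hq =>
      measurableSet_lt measurable_const (hmeas q hq.1)

/-- For `s₀ ≤ A < B` and `c^{A,B}(x) = E[1_{H_A ≤ T}·(S_{T∧H_B} − x)⁺]`:
`c^{A,B}(x) = 0` for all `x ≥ B`, and the left derivative of `c^{A,B}` at `B` equals
`−ℙ(H_B ≤ T)`. -/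
theorem stmt_14 {Ω : Type} [mΩ : MeasurableSpace Ω] (ℙ : Measure Ω) [IsProbabilityMeasure ℙ]
    (ℱ : Filtration ℝ mΩ) (S : ℝ → Ω → ℝ) (s₀ T : ℝ) (hs₀ : 0 < s₀) (hT : 0 < T)
    (hS : IsPosContMart ℙ ℱ S s₀ T) (A B : ℝ) (hA : s₀ ≤ A) (hAB : A < B) :
    (∀ x : ℝ, B ≤ x → (∫ ω in hitEvent S A T, max (stopVal S B T ω - x) 0 ∂ℙ) = 0) ∧
    HasDerivWithinAt (fun x => ∫ ω in hitEvent S A T, max (stopVal S B T ω - x) 0 ∂ℙ)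
      (-(ℙ (hitEvent S B T)).toReal) (Iio B) B := by
  classical
  have hTmem : (T:ℝ) ∈ Icc (0:ℝ) T := ⟨hT.le, le_rfl⟩
  have hmeas : ∀ t ∈ Icc (0:ℝ) T, Measurable (S t) := fun t ht =>
    ((hS.adapted t ht).measurable).mono (ℱ.le t) le_rfl
  have hSTmeas : Measurable (S T) := hmeas T hTmem
  have hSTint : Integrable (S T) ℙ := hS.integrable T hTmem
  set HitA := hitEvent S A T with hHitAdef
  set Hit := hitEvent S B T with hHitdef
  have hHitAmeas : MeasurableSet HitA := hitEvent_measurableSet S A T hT hmeas hS.contPaths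
  have hHitmeas : MeasurableSet Hit := hitEvent_measurableSet S B T hT hmeas hS.contPaths
  have hsub : Hit ⊆ HitA := by
    rintro ω ⟨t, ht, hb⟩
    exact ⟨t, ht, le_trans hAB.le hb⟩
  have hAe : ∀ᵐ ω ∂ℙ, S 0 ω < B := by
    filter_upwards [hS.init] with ω h
    rw [h]; exact lt_of_le_of_lt hA hAB
  have hST_lt : ∀ ω, ω ∉ Hit → S T ω < B := by
    intro ω hω
    by_contra hge
    exact hω ⟨T, hTmem, not_lt.1 hge⟩
  -- the a.e. representative of the integrand
  set g : ℝ → Ω → ℝ := fun x ω =>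
    if ω ∈ Hit then max (B - x) 0 else max (S T ω - x) 0 with hgdef
  have hgae : ∀ x : ℝ, ∀ᵐ ω ∂ℙ, max (stopVal S B T ω - x) 0 = g x ω := by
    intro x
    filter_upwards [hAe] with ω h0
    by_cases hω : ω ∈ Hit
    · simp only [hgdef, hω, if_true]
      rw [stopVal_of_hit (hS.contPaths ω) h0 hω]
    · simp only [hgdef, hω, if_false]
      rw [stopVal_of_not_hit hω]
  have hgmeas : ∀ x : ℝ, Measurable (g x) := fun x =>
    Measurable.ite hHitmeas measurable_const
      ((hSTmeas.sub measurable_const).max measurable_const)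
  have hgint : ∀ x : ℝ, Integrable (g x) ℙ := by
    intro x
    refine Integrable.mono' ((integrable_const (max (B - x) 0 + |x|)).add hSTint.abs)
      (hgmeas x).aestronglyMeasurable ?_
    refine Eventually.of_forall fun ω => ?_
    have hg0 : 0 ≤ g x ω := by simp only [hgdef]; split_ifs <;> exact le_max_right _ _
    simp only [Pi.add_apply]
    rw [Real.norm_eq_abs, abs_of_nonneg hg0]
    simp only [hgdef]
    split_ifs with hω
    · have h1 : (0:ℝ) ≤ |x| := abs_nonneg _
      have h2 : (0:ℝ) ≤ |S T ω| := abs_nonneg _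
      linarith
    · have h1 : max (S T ω - x) 0 ≤ |S T ω - x| :=
        max_le (le_abs_self _) (abs_nonneg _)
      have h2 : |S T ω - x| ≤ |S T ω| + |x| := abs_sub _ _
      have h3 : (0:ℝ) ≤ max (B - x) 0 := le_max_right _ _
      linarith
  have hfint : ∀ x : ℝ, Integrable (fun ω => max (S T ω - x) 0) ℙ := by
    intro x
    refine Integrable.mono' (hSTint.abs.add (integrable_const |x|))
      ((hSTmeas.sub measurable_const).max measurable_const).aestronglyMeasurable ?_
    refine Eventually.of_forall fun ω => ?_
    simp only [Pi.add_apply]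
    rw [Real.norm_eq_abs, abs_of_nonneg (le_max_right _ _)]
    have h1 : max (S T ω - x) 0 ≤ |S T ω - x| := max_le (le_abs_self _) (abs_nonneg _)
    have h2 : |S T ω - x| ≤ |S T ω| + |x| := abs_sub _ _
    linarith
  -- the decomposition of c
  have hc : ∀ x : ℝ, (∫ ω in HitA, max (stopVal S B T ω - x) 0 ∂ℙ)
      = (ℙ Hit).toReal * max (B - x) 0 + ∫ ω in HitA \ Hit, max (S T ω - x) 0 ∂ℙ := by
    intro x
    have h1 : (∫ ω in HitA, max (stopVal S B T ω - x) 0 ∂ℙ) = ∫ ω in HitA, g x ω ∂ℙ :=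
      integral_congr_ae (ae_restrict_of_ae (hgae x))
    rw [h1]
    have h2 : (∫ ω in HitA, g x ω ∂ℙ)
        = (∫ ω in Hit, g x ω ∂ℙ) + ∫ ω in HitA \ Hit, g x ω ∂ℙ := by
      rw [← setIntegral_union disjoint_sdiff_right (hHitAmeas.diff hHitmeas)
          (hgint x).integrableOn (hgint x).integrableOn, union_diff_cancel hsub]
    rw [h2]
    congr 1
    · rw [setIntegral_congr_fun hHitmeas (g := fun _ => max (B - x) 0)
        (fun ω hω => by simp only [hgdef]; rw [if_pos hω]), setIntegral_const, smul_eq_mul, measureReal_def]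
    · exact setIntegral_congr_fun (hHitAmeas.diff hHitmeas)
        (fun ω hω => by simp only [hgdef]; rw [if_neg hω.2])
  -- Part 1
  have hpart1 : ∀ x : ℝ, B ≤ x → (∫ ω in HitA, max (stopVal S B T ω - x) 0 ∂ℙ) = 0 := by
    intro x hx
    rw [hc x]
    have h1 : max (B - x) 0 = 0 := max_eq_right (by linarith)
    have h2 : (∫ ω in HitA \ Hit, max (S T ω - x) 0 ∂ℙ) = 0 := by
      rw [setIntegral_congr_fun (hHitAmeas.diff hHitmeas) (g := fun _ => (0:ℝ))
        (fun ω hω => max_eq_right (by linarith [hST_lt ω hω.2]))]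
      simp
    rw [h1, h2]; ring
  refine ⟨hpart1, ?_⟩
  -- Part 2
  set p := (ℙ Hit).toReal with hpdef
  set r : ℝ → ℝ := fun x => ∫ ω in HitA \ Hit, max (S T ω - x) 0 ∂ℙ with hrdef
  have hrnonneg : ∀ x, 0 ≤ r x := fun x =>
    setIntegral_nonneg (hHitAmeas.diff hHitmeas) (fun ω _ => le_max_right _ _)
  set E : ℝ → Set Ω := fun x => (HitA \ Hit) ∩ {ω | x < S T ω} with hEdef
  have hEmeas : ∀ x, MeasurableSet (E x) := fun x =>
    (hHitAmeas.diff hHitmeas).inter (measurableSet_lt measurable_const hSTmeas)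
  set h : ℝ → ℝ := fun x => (ℙ (E x)).toReal with hhdef
  have hhnonneg : ∀ x, 0 ≤ h x := fun x => ENNReal.toReal_nonneg
  have hrle : ∀ x, x < B → r x ≤ (B - x) * h x := by
    intro x hx
    have hEsub : E x ⊆ HitA \ Hit := inter_subset_left
    have hsplit : HitA \ Hit = E x ∪ ((HitA \ Hit) \ E x) := (union_diff_cancel hEsub).symm
    have hint := (hfint x).integrableOn (s := HitA \ Hit)
    rw [hrdef]
    simp only
    rw [hsplit, setIntegral_union disjoint_sdiff_right
        ((hHitAmeas.diff hHitmeas).diff (hEmeas x))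
        ((hfint x).integrableOn) ((hfint x).integrableOn)]
    have hzero : (∫ ω in (HitA \ Hit) \ E x, max (S T ω - x) 0 ∂ℙ) = 0 := by
      rw [setIntegral_congr_fun (((hHitAmeas.diff hHitmeas)).diff (hEmeas x))
        (g := fun _ => (0:ℝ)) ?_]
      · simp
      · intro ω hω
        have hle : S T ω ≤ x := by
          by_contra hgt
          exact hω.2 ⟨hω.1, not_le.1 hgt⟩
        exact max_eq_right (by linarith)
    rw [hzero, add_zero]
    calc (∫ ω in E x, max (S T ω - x) 0 ∂ℙ)
        ≤ ∫ _ω in E x, (B - x) ∂ℙ := by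
          refine setIntegral_mono_on ((hfint x).integrableOn)
            (integrableOn_const (measure_ne_top _ _)) (hEmeas x) ?_
          intro ω hω
          have h1 : S T ω < B := hST_lt ω hω.1.2
          exact max_le (by linarith) (by linarith)
      _ = (B - x) * h x := by rw [setIntegral_const, smul_eq_mul, mul_comm, measureReal_def]
  -- h tends to 0 on the left of B
  have htendh : Tendsto h (nhdsWithin B (Iio B)) (nhds 0) := by
    rw [Metric.tendsto_nhdsWithin_nhds]
    intro ε hε
    set F : ℕ → Set Ω := fun n => E (B - 1/(n+1)) with hFdef
    have hFanti : Antitone F := by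
      intro n m hnm
      apply inter_subset_inter_right
      intro ω hω
      simp only [mem_setOf_eq] at hω ⊢
      have h1 : (1:ℝ)/(m+1) ≤ 1/(n+1) := by
        apply one_div_le_one_div_of_le (by positivity)
        have : (n:ℝ) ≤ m := Nat.cast_le.2 hnm
        linarith
      linarith
    have hFempty : (⋂ n, F n) = ∅ := by
      ext ω
      simp only [mem_iInter, mem_empty_iff_false, iff_false]
      intro hω
      have hB : B ≤ S T ω := by
        have htend : Tendsto (fun n : ℕ => B - 1/(n+1)) atTop (nhds B) := by
          have := tendsto_one_div_add_atTop_nhds_zero_nat (𝕜 := ℝ)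
          have h2 := (tendsto_const_nhds (x := B)).sub this
          simpa using h2
        exact le_of_tendsto' htend fun n => le_of_lt (hω n).2
      exact ((hω 0).1).2 ⟨T, hTmem, hB⟩
    have htendF : Tendsto (fun n => ℙ (F n)) atTop (nhds 0) := by
      have := MeasureTheory.tendsto_measure_iInter_atTop (μ := ℙ) (s := F)
        (fun n => (hEmeas _).nullMeasurableSet) hFanti ⟨0, measure_ne_top _ _⟩
      rwa [hFempty, measure_empty] at this
    have htendF' : Tendsto (fun n => (ℙ (F n)).toReal) atTop (nhds 0) := by
      have := (ENNReal.tendsto_toReal (a := 0) (by simp)).comp htendF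
      simpa [Function.comp_def] using this
    obtain ⟨N, hN⟩ := (htendF'.eventually (gt_mem_nhds hε)).exists
    refine ⟨1/(N+1), by positivity, ?_⟩
    intro x hx hdist
    have hxlt : x < B := hx
    have hxgt : B - 1/(N+1) < x := by
      rw [Real.dist_eq, abs_of_nonpos (by linarith)] at hdist
      linarith
    have hsubF : E x ⊆ F N := by
      apply inter_subset_inter_right
      intro ω hω
      simp only [mem_setOf_eq] at hω ⊢
      linarith
    have hle : h x ≤ (ℙ (F N)).toReal :=
      ENNReal.toReal_mono (measure_ne_top _ _) (measure_mono hsubF)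
    rw [Real.dist_eq, sub_zero, abs_of_nonneg (hhnonneg x)]
    exact lt_of_le_of_lt hle hN
  -- the quotient tends to 0
  have hquot : Tendsto (fun x => r x / (B - x)) (nhdsWithin B (Iio B)) (nhds 0) := by
    refine tendsto_of_tendsto_of_tendsto_of_le_of_le' tendsto_const_nhds htendh ?_ ?_
    · filter_upwards [self_mem_nhdsWithin] with x hx
      exact div_nonneg (hrnonneg x) (by simp only [mem_Iio] at hx; linarith)
    · filter_upwards [self_mem_nhdsWithin] with x hx
      simp only [mem_Iio] at hx
      rw [div_le_iff₀ (by linarith)]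
      calc r x ≤ (B - x) * h x := hrle x hx
        _ = h x * (B - x) := mul_comm _ _
  -- assemble
  rw [hasDerivWithinAt_iff_tendsto_slope]
  have hIio : (Iio B) \ {B} = Iio B := diff_singleton_eq_self (by simp)
  rw [hIio]
  have hfinal : Tendsto (fun x => -p - r x / (B - x)) (nhdsWithin B (Iio B)) (nhds (-p)) := by
    have := (tendsto_const_nhds (x := -p)).sub hquot
    simpa using this
  have hc2 : ∀ x : ℝ, (∫ ω in HitA, max (stopVal S B T ω - x) 0 ∂ℙ)
      = p * max (B - x) 0 + r x := fun x => hc x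
  refine hfinal.congr' ?_
  filter_upwards [self_mem_nhdsWithin] with x hx
  simp only [mem_Iio] at hx
  rw [slope_def_field, hpart1 B le_rfl, hc2 x, max_eq_left (by linarith)]
  have hne : x - B ≠ 0 := sub_ne_zero.2 (ne_of_lt hx)
  have hne' : B - x ≠ 0 := sub_ne_zero.2 (ne_of_gt hx)
  field_simp
  ring
end
end

section
/- Let 0 ≤ T' ≤ T and s₀ ≤ A < B. Then for every x ∈ ℝ: E[ 1_{H_A ≤ T'} · (S_{T'∧H_B} − x)⁺ ] + ( ℙ(H_A ≤ T) − ℙ(H_A ≤ T') ) · (A − x)⁺ ≤ E[ 1_{H_A ≤ T} · (S_{T∧H_B} − x)⁺ ]. -/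
open MeasureTheory Set Filter
open scoped Topology ENNReal

noncomputable section

def clamp (T t : ℝ) : ℝ := max 0 (min t T)

lemma clamp_mem {T : ℝ} (hT : 0 ≤ T) (t : ℝ) : clamp T t ∈ Icc (0:ℝ) T := by
  constructor
  · exact le_max_left _ _
  · exact max_le hT (min_le_right _ _)

lemma clamp_of_mem {T t : ℝ} (ht : t ∈ Icc (0:ℝ) T) : clamp T t = t := by
  rw [clamp, min_eq_left ht.2, max_eq_right ht.1]

lemma clamp_mono (T : ℝ) : Monotone (clamp T) := fun a b h =>
  max_le_max le_rfl (min_le_min_right _ h)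

lemma clamp_continuous (T : ℝ) : Continuous (clamp T) :=
  continuous_const.max (continuous_id.min continuous_const)

/-- Coercion of a real-valued random time to a `WithTop ℝ`-valued one. -/
abbrev wt {Ω : Type} (ρ : Ω → ℝ) : Ω → WithTop ℝ := fun ω => (ρ ω : WithTop ℝ)

lemma wt_st {Ω : Type} [mΩ : MeasurableSpace Ω] {f : Filtration ℝ mΩ} {τ : Ω → ℝ}
    (h : IsStoppingTime f (wt τ)) (t : ℝ) : MeasurableSet[f t] {ω | τ ω ≤ t} := by
  simpa only [wt, WithTop.coe_le_coe] using h t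

variable {Ω : Type} [mΩ : MeasurableSpace Ω]

def cF (ℱ : Filtration ℝ mΩ) (T : ℝ) : Filtration ℝ mΩ where
  seq := fun t => ℱ (clamp T t)
  mono' := fun _ _ h => ℱ.mono (clamp_mono T h)
  le' := fun _ => ℱ.le _

lemma cF_apply {ℱ : Filtration ℝ mΩ} {T t : ℝ} : cF ℱ T t = ℱ (clamp T t) := rfl

lemma cF_eq {ℱ : Filtration ℝ mΩ} {T t : ℝ} (ht : t ∈ Icc (0:ℝ) T) : cF ℱ T t = ℱ t := by
  rw [cF_apply, clamp_of_mem ht]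

def cS (S : ℝ → Ω → ℝ) (T : ℝ) : ℝ → Ω → ℝ := fun t ω => S (clamp T t) ω

lemma cS_of_mem {S : ℝ → Ω → ℝ} {T t : ℝ} (ht : t ∈ Icc (0:ℝ) T) : cS S T t = S t := by
  unfold cS; rw [clamp_of_mem ht]

lemma cS_T {S : ℝ → Ω → ℝ} {T : ℝ} (hT : 0 ≤ T) : cS S T T = S T :=
  cS_of_mem ⟨hT, le_rfl⟩

variable {Ω : Type} [mΩ : MeasurableSpace Ω] {ℙ : Measure Ω} [IsProbabilityMeasure ℙ]
  {ℱ : Filtration ℝ mΩ} {S : ℝ → Ω → ℝ} {s₀ T : ℝ}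

section Basic
variable (hT : 0 ≤ T) (hS : IsPosContMart ℙ ℱ S s₀ T)
include hT hS

lemma cS_cont (ω : Ω) : Continuous fun t => cS S T t ω :=
  (hS.contPaths ω).comp_continuous (clamp_continuous T) (clamp_mem hT)

lemma cS_adapted : StronglyAdapted (cF ℱ T) (cS S T) := fun t =>
  hS.adapted (clamp T t) (clamp_mem hT t)

lemma cS_mart : Martingale (cS S T) (cF ℱ T) ℙ := by
  refine ⟨cS_adapted hT hS, fun s t hst => ?_⟩
  exact hS.mart (clamp T s) (clamp T t) (clamp_mem hT s) (clamp_mem hT t) (clamp_mono T hst)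

lemma cS_prog : ProgMeasurable (cF ℱ T) (cS S T) :=
  (cS_adapted hT hS).progMeasurable_of_continuous (cS_cont hT hS)

lemma cS_ae_nonneg : ∀ᵐ ω ∂ℙ, ∀ t : ℝ, 0 ≤ cS S T t ω := by
  have h : ∀ᵐ ω ∂ℙ, ∀ q : ℚ, 0 ≤ cS S T q ω := by
    rw [ae_all_iff]
    intro q
    filter_upwards [hS.pos (clamp T q) (clamp_mem hT q)] with ω hω using hω.le
  filter_upwards [h] with ω hω t
  have hclosed : IsClosed {u : ℝ | 0 ≤ cS S T u ω} :=
    isClosed_le continuous_const (cS_cont hT hS ω)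
  have : (univ : Set ℝ) ⊆ closure {u : ℝ | 0 ≤ cS S T u ω} := by
    rw [← Rat.denseRange_cast.closure_range]
    exact closure_mono (range_subset_iff.2 hω)
  exact hclosed.closure_subset (this (mem_univ t))

lemma hitEvent_eq {L t : ℝ} (ht : t ∈ Icc (0:ℝ) T) :
    hitEvent S L t = ⋂ (m : ℕ),
      ((⋃ (q : ℚ) (_ : (q:ℝ) ∈ Icc (0:ℝ) t), {ω | L - 1/((m:ℝ)+1) < S q ω})
        ∪ {ω | L - 1/((m:ℝ)+1) < S t ω}) := by
  ext ω
  constructor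
  · rintro ⟨s, hs, hLs⟩
    refine mem_iInter.2 fun m => ?_
    have hε : (0:ℝ) < 1/((m:ℝ)+1) := by positivity
    by_cases hst : s = t
    · exact mem_union_right _ (by simpa [← hst] using lt_of_lt_of_le (sub_lt_self L hε) hLs)
    have hslt : s < t := lt_of_le_of_ne hs.2 hst
    have hc : ContinuousAt (fun u => cS S T u ω) s := (cS_cont hT hS ω).continuousAt
    obtain ⟨δ, hδ, hcd⟩ := Metric.continuousAt_iff.mp hc _ hε
    obtain ⟨q, hq1, hq2⟩ := exists_rat_btwn (lt_min hslt (lt_add_of_pos_right s hδ))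
    have hq2t : (q:ℝ) ≤ t := le_of_lt (lt_of_lt_of_le hq2 (min_le_left _ _))
    have hqIcc : (q:ℝ) ∈ Icc (0:ℝ) t := ⟨le_of_lt (lt_of_le_of_lt hs.1 hq1), hq2t⟩
    have hdist : dist (q:ℝ) s < δ := by
      rw [Real.dist_eq, abs_of_pos (by linarith)]
      have := lt_of_lt_of_le hq2 (min_le_right _ _)
      linarith
    have h2 := hcd hdist
    rw [Real.dist_eq, abs_lt] at h2
    have hcs : cS S T s ω = S s ω := by
      rw [show cS S T s ω = S (clamp T s) ω from rfl,
        clamp_of_mem ⟨hs.1, hs.2.trans ht.2⟩]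
    have hcq : cS S T (q:ℝ) ω = S q ω := by
      rw [show cS S T (q:ℝ) ω = S (clamp T (q:ℝ)) ω from rfl,
        clamp_of_mem ⟨hqIcc.1, hqIcc.2.trans ht.2⟩]
    refine mem_union_left _ (mem_iUnion₂.2 ⟨q, hqIcc, ?_⟩)
    simp only [mem_setOf_eq]
    rw [hcs, hcq] at h2
    linarith [h2.1, h2.2]
  · intro hω
    rw [mem_iInter] at hω
    obtain ⟨s, hsmem, hmax⟩ := isCompact_Icc.exists_isMaxOn (by exact ⟨0, left_mem_Icc.2 ht.1⟩)
      ((cS_cont hT hS ω).continuousOn : ContinuousOn (fun u => cS S T u ω) (Icc 0 t))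
    have hclamp : ∀ u ∈ Icc (0:ℝ) t, cS S T u ω = S u ω := fun u hu => by
      rw [show cS S T u ω = S (clamp T u) ω from rfl, clamp_of_mem ⟨hu.1, hu.2.trans ht.2⟩]
    have hL : L ≤ cS S T s ω := by
      by_contra hlt
      push_neg at hlt
      obtain ⟨m, hm⟩ := exists_nat_one_div_lt (show 0 < L - cS S T s ω by linarith)
      rcases hω m with h | h
      · obtain ⟨q, hq, hval⟩ := mem_iUnion₂.1 h
        have := hmax hq
        simp only [mem_setOf_eq] at hval this
        rw [← hclamp q hq] at hval
        have : L - 1/((m:ℝ)+1) < cS S T s ω := lt_of_lt_of_le hval this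
        linarith
      · simp only [mem_setOf_eq] at h
        have hmem := hmax (right_mem_Icc.2 ht.1)
        simp only [mem_setOf_eq] at hmem
        rw [← hclamp t (right_mem_Icc.2 ht.1)] at h
        have : L - 1/((m:ℝ)+1) < cS S T s ω := lt_of_lt_of_le h hmem
        linarith
    exact ⟨s, hsmem, by rw [← hclamp s hsmem]; exact hL⟩

lemma hitEvent_mble {L t : ℝ} (ht : t ∈ Icc (0:ℝ) T) :
    MeasurableSet[ℱ t] (hitEvent S L t) := by
  rw [hitEvent_eq hT hS ht]
  refine MeasurableSet.iInter fun m => MeasurableSet.union ?_ ?_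
  · refine MeasurableSet.iUnion fun q => MeasurableSet.iUnion fun hq => ?_
    have hm : StronglyMeasurable[ℱ t] (S q) :=
      (hS.adapted q ⟨hq.1, hq.2.trans ht.2⟩).mono (ℱ.mono hq.2)
    exact hm.measurable measurableSet_Ioi
  · exact (hS.adapted t ht).measurable measurableSet_Ioi

end Basic

section HitLemmas
variable (hT : 0 ≤ T) (hS : IsPosContMart ℙ ℱ S s₀ T)
include hT hS

lemma hitEvent_def' {L t' : ℝ} {ω : Ω} :
    ω ∈ hitEvent S L t' ↔ ∃ j ∈ Icc (0:ℝ) t', S j ω ∈ Ici L := by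
  simp [hitEvent, mem_Ici]

omit hT hS in
lemma hitEvent_mono {L t₁ t₂ : ℝ} (h : t₁ ≤ t₂) : hitEvent S L t₁ ⊆ hitEvent S L t₂ :=
  fun ω ⟨s, hs, hLs⟩ => ⟨s, ⟨hs.1, hs.2.trans h⟩, hLs⟩

lemma hitting_mem' {L t' : ℝ} (ht' : t' ∈ Icc (0:ℝ) T) {ω : Ω} (hω : ω ∈ hitEvent S L t') :
    hittingBtwn S (Ici L) 0 t' ω ∈ Icc (0:ℝ) t' ∧ L ≤ S (hittingBtwn S (Ici L) 0 t' ω) ω := by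
  have hex : ∃ j ∈ Icc (0:ℝ) t', S j ω ∈ Ici L := (hitEvent_def' hT hS).1 hω
  have hitval : hittingBtwn S (Ici L) 0 t' ω = sInf (Icc (0:ℝ) t' ∩ {i | S i ω ∈ Ici L}) := by
    simp only [hittingBtwn, if_pos hex]
  have hMeq : Icc (0:ℝ) t' ∩ {i | S i ω ∈ Ici L}
      = Icc (0:ℝ) t' ∩ (fun u => cS S T u ω)⁻¹' (Ici L) := by
    ext i
    simp only [mem_inter_iff, mem_setOf_eq, mem_preimage, and_congr_right_iff]
    intro hi
    rw [show cS S T i ω = S (clamp T i) ω from rfl, clamp_of_mem ⟨hi.1, hi.2.trans ht'.2⟩]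
  have hclosed : IsClosed (Icc (0:ℝ) t' ∩ {i | S i ω ∈ Ici L}) := by
    rw [hMeq]
    exact isClosed_Icc.inter (isClosed_Ici.preimage (cS_cont hT hS ω))
  obtain ⟨j, hj, hjs⟩ := hex
  have hne : (Icc (0:ℝ) t' ∩ {i | S i ω ∈ Ici L}).Nonempty := ⟨j, hj, hjs⟩
  have hbdd : BddBelow (Icc (0:ℝ) t' ∩ {i | S i ω ∈ Ici L}) := bddBelow_Icc.inter_of_left
  have hmem := hclosed.csInf_mem hne hbdd
  rw [← hitval] at hmem
  exact ⟨hmem.1, hmem.2⟩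

omit hT hS in
lemma hitting_eq_of_not_mem {L t' : ℝ} {ω : Ω} (hω : ω ∉ hitEvent S L t') :
    hittingBtwn S (Ici L) 0 t' ω = t' := by
  have : ¬∃ j ∈ Icc (0:ℝ) t', S j ω ∈ Ici L := by
    simpa [hitEvent, mem_Ici] using hω
  simp only [hittingBtwn, if_neg this]

/-- The value of the process at a positive hitting time is at most the level. -/
lemma S_hitting_le {L t' : ℝ} (ht' : t' ∈ Icc (0:ℝ) T) {ω : Ω}
    (hpos : 0 < hittingBtwn S (Ici L) 0 t' ω) :
    S (hittingBtwn S (Ici L) 0 t' ω) ω ≤ L := by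
  set h := hittingBtwn S (Ici L) 0 t' ω with hh
  have hle : h ≤ t' := hittingBtwn_le ω
  have hcl : cS S T h ω = S h ω := by
    rw [show cS S T h ω = S (clamp T h) ω from rfl,
      clamp_of_mem ⟨hpos.le, hle.trans ht'.2⟩]
  rw [← hcl]
  have htend : Tendsto (fun u => cS S T u ω) (nhdsWithin h (Iio h)) (nhds (cS S T h ω)) :=
    ((cS_cont hT hS ω).continuousAt).continuousWithinAt
  refine le_of_tendsto htend ?_
  filter_upwards [Ioo_mem_nhdsLT_of_mem (show h ∈ Ioc (0:ℝ) h from ⟨hpos, le_rfl⟩)] with v hv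
  have hnot : S v ω ∉ Ici L := notMem_of_lt_hittingBtwn (hh ▸ hv.2) hv.1.le
  have : cS S T v ω = S v ω := by
    rw [show cS S T v ω = S (clamp T v) ω from rfl,
      clamp_of_mem ⟨hv.1.le, (hv.2.le.trans hle).trans ht'.2⟩]
  rw [this]
  exact le_of_not_ge (by simpa [mem_Ici] using hnot)

end HitLemmas

section STLemmas
variable (hT : 0 ≤ T) (hS : IsPosContMart ℙ ℱ S s₀ T)
include hT hS

lemma hitting_le_iff' {L r t' : ℝ} (hr0 : 0 ≤ r) (hrt : r < t') (ht' : t' ≤ T) {ω : Ω} :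
    hittingBtwn S (Ici L) 0 t' ω ≤ r ↔ ω ∈ hitEvent S L r := by
  constructor
  · intro h
    by_cases hω : ω ∈ hitEvent S L t'
    · obtain ⟨hmem, hval⟩ := hitting_mem' hT hS ⟨hr0.trans hrt.le, ht'⟩ hω
      exact ⟨_, ⟨hmem.1, h⟩, hval⟩
    · rw [hitting_eq_of_not_mem hω] at h
      exact absurd h (not_le.2 hrt)
  · rintro ⟨s, hs, hLs⟩
    exact le_trans (hittingBtwn_le_of_mem hs.1 (hs.2.trans hrt.le) (mem_Ici.2 hLs)) hs.2

lemma hitting_isST {L t' : ℝ} (ht'0 : 0 ≤ t') (ht' : t' ≤ T) :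
    IsStoppingTime (cF ℱ T) (wt (hittingBtwn S (Ici L) 0 t')) := by
  intro r
  simp only [wt, WithTop.coe_le_coe]
  rcases lt_or_ge r 0 with hr | hr0
  · have : {ω : Ω | hittingBtwn S (Ici L) 0 t' ω ≤ r} = ∅ := by
      ext ω
      simp only [mem_setOf_eq, mem_empty_iff_false, iff_false, not_le]
      exact lt_of_lt_of_le hr (le_hittingBtwn ht'0 ω)
    rw [this]
    exact @MeasurableSet.empty _ (cF ℱ T r)
  rcases le_or_gt t' r with hr2 | hr2
  · have : {ω : Ω | hittingBtwn S (Ici L) 0 t' ω ≤ r} = univ := by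
      ext ω
      simp only [mem_setOf_eq, mem_univ, iff_true]
      exact (hittingBtwn_le ω).trans hr2
    rw [this]
    exact MeasurableSet.univ
  · have : {ω : Ω | hittingBtwn S (Ici L) 0 t' ω ≤ r} = hitEvent S L r := by
      ext ω
      exact hitting_le_iff' hT hS hr0 hr2 ht'
    rw [this, show (cF ℱ T) r = ℱ r from cF_eq ⟨hr0, hr2.le.trans ht'⟩]
    exact hitEvent_mble hT hS ⟨hr0, hr2.le.trans ht'⟩

end STLemmas

/-! ### Grid discretization -/

def gc (T : ℝ) (n : ℕ) (r : ℝ) : ℝ := T * (⌈r * (n+1) / T⌉₊ : ℝ) / (n+1)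

section GC
variable {n : ℕ} {r t : ℝ}

lemma le_gc (hT : 0 < T) (hr : 0 ≤ r) : r ≤ gc T n r := by
  have h := (div_le_iff₀ hT).1 (Nat.le_ceil (r * (n+1) / T))
  rw [gc, le_div_iff₀ (show (0:ℝ) < (n:ℝ)+1 by positivity)]
  nlinarith

lemma gc_le (hT : 0 < T) (hrT : r ≤ T) : gc T n r ≤ T := by
  have hc : (⌈r * (n+1) / T⌉₊ : ℝ) ≤ (n:ℝ) + 1 := by
    have : ⌈r * (n+1) / T⌉₊ ≤ n + 1 := by
      rw [Nat.ceil_le, div_le_iff₀ hT]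
      push_cast
      nlinarith
    exact_mod_cast this
  rw [gc, div_le_iff₀ (show (0:ℝ) < (n:ℝ)+1 by positivity)]
  nlinarith

lemma gc_nonneg (hT : 0 < T) : 0 ≤ gc T n r := by
  rw [gc]; positivity

lemma gc_le_add (hT : 0 < T) (hr : 0 ≤ r) : gc T n r ≤ r + T / (n+1) := by
  have hx : (0:ℝ) ≤ r * (n+1) / T := by positivity
  have h : (⌈r * (n+1) / T⌉₊ : ℝ) ≤ r * (n+1) / T + 1 := (Nat.ceil_lt_add_one hx).le
  rw [gc, div_le_iff₀ (show (0:ℝ) < (n:ℝ)+1 by positivity)]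
  have h2 : T * (⌈r * (n+1) / T⌉₊ : ℝ) ≤ T * (r * (n+1) / T + 1) := by nlinarith
  refine h2.trans (le_of_eq ?_)
  field_simp

lemma gc_le_iff (hT : 0 < T) (hr : 0 ≤ r) (ht : 0 ≤ t) :
    gc T n r ≤ t ↔ r ≤ T * (⌊t * (n+1) / T⌋₊ : ℝ) / (n+1) := by
  rw [gc, div_le_iff₀ (show (0:ℝ) < (n:ℝ)+1 by positivity),
    le_div_iff₀ (show (0:ℝ) < (n:ℝ)+1 by positivity)]
  have h1 : T * (⌈r * (n+1) / T⌉₊ : ℝ) ≤ t * ((n:ℝ)+1) ↔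
      (⌈r * (n+1) / T⌉₊ : ℝ) ≤ t * ((n:ℝ)+1) / T := by
    rw [le_div_iff₀ hT]; constructor <;> intro h <;> nlinarith
  rw [h1]
  have h2 : ((⌈r * (n+1) / T⌉₊ : ℝ) ≤ t * ((n:ℝ)+1) / T) ↔
      (⌈r * (n+1) / T⌉₊ ≤ ⌊t * ((n:ℝ)+1) / T⌋₊) := by
    exact (Nat.le_floor_iff (by positivity)).symm
  rw [h2, Nat.ceil_le, div_le_iff₀ hT]
  constructor <;> intro h <;> nlinarith

lemma gc_floor_le (hT : 0 < T) (ht : 0 ≤ t) : T * (⌊t * (n+1) / T⌋₊ : ℝ) / (n+1) ≤ t := by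
  have h := Nat.floor_le (show (0:ℝ) ≤ t * (n+1) / T by positivity)
  rw [div_le_iff₀ (show (0:ℝ) < (n:ℝ)+1 by positivity)]
  rw [le_div_iff₀ hT] at h
  nlinarith

end GC

section ML
variable (hT : 0 < T) (hS : IsPosContMart ℙ ℱ S s₀ T)
include hT hS

lemma gcρ_isST {ρ : Ω → ℝ} (hρ : IsStoppingTime (cF ℱ T) (wt ρ)) (hρ0 : ∀ ω, 0 ≤ ρ ω) (n : ℕ) :
    IsStoppingTime (cF ℱ T) (wt fun ω => gc T n (ρ ω)) := by
  intro t
  simp only [wt, WithTop.coe_le_coe]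
  rcases lt_or_ge t 0 with ht | ht
  · have : {ω : Ω | gc T n (ρ ω) ≤ t} = ∅ := by
      ext ω
      simp only [mem_setOf_eq, mem_empty_iff_false, iff_false, not_le]
      exact lt_of_lt_of_le ht (gc_nonneg hT)
    rw [this]
    exact @MeasurableSet.empty _ (cF ℱ T t)
  · have heq : {ω : Ω | gc T n (ρ ω) ≤ t} = {ω : Ω | ρ ω ≤ T * (⌊t * (n+1) / T⌋₊ : ℝ) / (n+1)} := by
      ext ω
      exact gc_le_iff hT (hρ0 ω) ht
    rw [heq]
    exact (cF ℱ T).mono (gc_floor_le hT ht) _ (wt_st hρ _)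

omit hT hS in
lemma integrable_min_const {u : Ω → ℝ} (hu : Integrable u ℙ) (c : ℝ) :
    Integrable (fun ω => min (u ω) c) ℙ := by
  refine Integrable.mono' (hu.abs.add (integrable_const |c|)) ?_ ?_
  · exact hu.1.inf aestronglyMeasurable_const
  · refine Eventually.of_forall fun ω => ?_
    simp only [Real.norm_eq_abs, Pi.add_apply]
    rcases le_total (u ω) c with h | h
    · rw [min_eq_left h]
      exact le_add_of_nonneg_right (abs_nonneg c)
    · rw [min_eq_right h]
      exact le_add_of_nonneg_left (abs_nonneg (u ω))

lemma ML {ρ : Ω → ℝ} (hρ : IsStoppingTime (cF ℱ T) (wt ρ))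
    (hρ0 : ∀ ω, 0 ≤ ρ ω) (hρT : ∀ ω, ρ ω ≤ T) {C : ℝ}
    (hbd : ∀ᵐ ω ∂ℙ, stoppedValue (cS S T) (wt ρ) ω ≤ C)
    {E : Set Ω} (hE : MeasurableSet[hρ.measurableSpace] E) :
    ∫ ω in E, stoppedValue (cS S T) (wt ρ) ω ∂ℙ = ∫ ω in E, S T ω ∂ℙ := by
  classical
  set g : Ω → ℝ := S T with hg_def
  have hg_int : Integrable g ℙ := hS.integrable T ⟨hT.le, le_rfl⟩
  have hg_nonneg : 0 ≤ᵐ[ℙ] g := (hS.pos T ⟨hT.le, le_rfl⟩).mono fun ω h => h.le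
  set ρn : ℕ → Ω → ℝ := fun n ω => gc T n (ρ ω) with hρn_def
  have hst : ∀ n, IsStoppingTime (cF ℱ T) (wt (ρn n)) := fun n => gcρ_isST hT hS hρ hρ0 n
  have hle : ∀ n ω, ρn n ω ≤ T := fun n ω => gc_le hT (hρT ω)
  have hle' : ∀ n ω, wt (ρn n) ω ≤ (T : WithTop ℝ) := fun n ω => WithTop.coe_le_coe.2 (hle n ω)
  have hρρn : ∀ n ω, ρ ω ≤ ρn n ω := fun n ω => le_gc hT (hρ0 ω)
  have hcnt : ∀ n, (range (wt (ρn n))).Countable := by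
    intro n
    refine Countable.mono ?_ (countable_range fun k : ℕ => ((T * (k:ℝ) / ((n:ℝ)+1) : ℝ) : WithTop ℝ))
    rintro _ ⟨ω, rfl⟩
    exact ⟨⌈ρ ω * (n+1) / T⌉₊, rfl⟩
  have hM : Martingale (cS S T) (cF ℱ T) ℙ := cS_mart hT.le hS
  have hcond : ∀ n, stoppedValue (cS S T) (wt (ρn n))
      =ᵐ[ℙ] ℙ[g | ((hst n).measurableSpace)] := by
    intro n
    have := hM.stoppedValue_ae_eq_condExp_of_le_const_of_countable_range (hst n)
      (fun ω => hle' n ω) (hcnt n)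
    rwa [cS_T hT.le] at this
  set φ : ℕ → Ω → ℝ := fun n => ℙ[g | ((hst n).measurableSpace)] with hφ_def
  have hmle : ∀ n, hρ.measurableSpace ≤ (hst n).measurableSpace := fun n =>
    hρ.measurableSpace_mono (hst n) (fun ω => WithTop.coe_le_coe.2 (hρρn n ω))
  have hEn : ∀ n, MeasurableSet[(hst n).measurableSpace] E := fun n => hmle n E hE
  have hEm : MeasurableSet E := hρ.measurableSpace_le_of_le (fun ω => WithTop.coe_le_coe.2 (hρT ω)) E hE
  have hInt : ∀ n, ∫ ω in E, φ n ω ∂ℙ = ∫ ω in E, g ω ∂ℙ := fun n =>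
    setIntegral_condExp ((hst n).measurableSpace_le_of_le (hle' n)) hg_int (hEn n)
  set f : Ω → ℝ := stoppedValue (cS S T) (wt ρ) with hf_def
  have hf_sm : StronglyMeasurable f :=
    (stronglyMeasurable_stoppedValue_of_le (cS_prog hT.le hS) hρ (fun ω => WithTop.coe_le_coe.2 (hρT ω))).mono ((cF ℱ T).le T)
  have hf_nonneg : 0 ≤ᵐ[ℙ] f := by
    filter_upwards [cS_ae_nonneg hT.le hS] with ω hω
    exact hω (ρ ω)
  have hf_int : Integrable f ℙ := by
    refine Integrable.mono' (integrable_const (max C 0)) hf_sm.aestronglyMeasurable ?_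
    filter_upwards [hbd, hf_nonneg] with ω h1 h2
    rw [Real.norm_eq_abs, abs_of_nonneg h2]
    exact h1.trans (le_max_left _ _)
  have htendρ : ∀ ω, Tendsto (fun n => ρn n ω) atTop (𝓝 (ρ ω)) := by
    intro ω
    have h0 : Tendsto (fun n : ℕ => T / ((n:ℝ)+1)) atTop (𝓝 0) := by
      have := (tendsto_add_atTop_iff_nat 1).2 (tendsto_const_div_atTop_nhds_zero_nat T)
      refine this.congr fun n => ?_
      push_cast
      ring_nf
    have hup : Tendsto (fun n : ℕ => ρ ω + T / ((n:ℝ)+1)) atTop (𝓝 (ρ ω)) := by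
      simpa using tendsto_const_nhds.add h0
    exact tendsto_of_tendsto_of_tendsto_of_le_of_le tendsto_const_nhds hup
      (fun n => hρρn n ω) (fun n => gc_le_add hT (hρ0 ω))
  have htend : ∀ ω, Tendsto (fun n => stoppedValue (cS S T) (wt (ρn n)) ω) atTop (𝓝 (f ω)) :=
    fun ω => ((cS_cont hT.le hS ω).continuousAt.tendsto).comp (htendρ ω)
  have hφtend : ∀ᵐ ω ∂ℙ, Tendsto (fun n => φ n ω) atTop (𝓝 (f ω)) := by
    have hall : ∀ᵐ ω ∂ℙ, ∀ n, stoppedValue (cS S T) (wt (ρn n)) ω = φ n ω :=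
      ae_all_iff.2 fun n => hcond n
    filter_upwards [hall] with ω hω
    exact (htend ω).congr fun n => hω n
  have hφ_nonneg : ∀ n, 0 ≤ᵐ[ℙ] φ n := fun n => condExp_nonneg hg_nonneg
  have hφ_int : ∀ n, Integrable (φ n) ℙ := fun n => integrable_condExp
  have hφ_integral : ∀ n, ∫ ω, φ n ω ∂ℙ = ∫ ω, g ω ∂ℙ := fun n =>
    integral_condExp ((hst n).measurableSpace_le_of_le (hle' n))
  have hφ_sm : ∀ n, StronglyMeasurable[(hst n).measurableSpace] (φ n) := fun n =>
    stronglyMeasurable_condExp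
  -- Main limit claim
  have hL1 : Tendsto (fun n => ∫ ω, |φ n ω - f ω| ∂ℙ) atTop (𝓝 0) := by
    rw [Metric.tendsto_atTop]
    intro ε hε
    set ε' : ℝ := ε/4 with hε'_def
    have hε' : 0 < ε' := by positivity
    -- truncation level k
    have hgtend : Tendsto (fun k : ℕ => ∫ ω, min (g ω) k ∂ℙ) atTop (𝓝 (∫ ω, g ω ∂ℙ)) := by
      refine tendsto_integral_of_dominated_convergence (fun ω => |g ω|)
        (fun k => hg_int.1.inf aestronglyMeasurable_const) hg_int.abs ?_ ?_
      · intro k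
        filter_upwards [hg_nonneg] with ω hω
        rw [Real.norm_eq_abs, abs_of_nonneg (le_min hω (Nat.cast_nonneg k))]
        exact (min_le_left _ _).trans (le_abs_self _)
      · refine Eventually.of_forall fun ω => ?_
        refine tendsto_atTop_of_eventually_const (i₀ := ⌈g ω⌉₊) fun k hk => ?_
        exact min_eq_left ((Nat.le_ceil _).trans (Nat.cast_le.2 hk))
    obtain ⟨k, hk⟩ := (Metric.tendsto_atTop.1 hgtend) ε' hε'
    have hk' := hk k le_rfl
    rw [Real.dist_eq] at hk'
    have hgk_int : Integrable (fun ω => min (g ω) (k:ℝ)) ℙ := integrable_min_const hg_int _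
    have hksmall : ∫ ω, (g ω - min (g ω) (k:ℝ)) ∂ℙ < ε' := by
      rw [integral_sub hg_int hgk_int]
      cases abs_lt.1 hk' with
      | intro h1 h2 => linarith
    have hgpos : 0 ≤ ∫ ω, g ω ∂ℙ := integral_nonneg_of_ae hg_nonneg
    set c : ℝ := max C ((k:ℝ) * (∫ ω, g ω ∂ℙ) / ε' + 1) with hc_def
    have hc0 : 0 < c := lt_of_lt_of_le (by positivity) (le_max_right _ _)
    have hCc : C ≤ c := le_max_left _ _
    have hkc : (k:ℝ) * (∫ ω, g ω ∂ℙ) / c ≤ ε' := by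
      have h2 : (k:ℝ) * (∫ ω, g ω ∂ℙ) / ε' ≤ c :=
        le_trans (by linarith) (le_max_right C ((k:ℝ) * (∫ ω, g ω ∂ℙ) / ε' + 1))
      have h3 := (div_le_iff₀ hε').1 h2
      rw [div_le_iff₀ hc0]
      linarith
    -- integrability of truncated φ's
    have hφmin : ∀ n, Integrable (fun ω => min (φ n ω) c) ℙ := fun n =>
      integrable_min_const (hφ_int n) c
    have hfmin : Integrable (fun ω => min (f ω) c) ℙ := integrable_min_const hf_int c
    -- the tail bound
    have htail : ∀ n, ∫ ω, |φ n ω - f ω| ∂ℙ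
        ≤ ∫ ω, |min (φ n ω) c - min (f ω) c| ∂ℙ + 2 * ε' := by
      intro n
      set Fn : Set Ω := {ω | c < φ n ω} with hFn_def
      have hFn_meas_n : MeasurableSet[(hst n).measurableSpace] Fn :=
        stronglyMeasurable_const.measurableSet_lt (hφ_sm n)
      have hFn_meas : MeasurableSet Fn :=
        ((hst n).measurableSpace_le_of_le (hle' n)) _ hFn_meas_n
      have hptwise : ∀ᵐ ω ∂ℙ, |φ n ω - f ω|
          ≤ |min (φ n ω) c - min (f ω) c| + Fn.indicator (φ n) ω := by
        filter_upwards [hφ_nonneg n, hf_nonneg, hbd] with ω h1 h2 h3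
        by_cases hωc : c < φ n ω
        · rw [indicator_of_mem (show ω ∈ Fn from hωc)]
          have hminφ : min (φ n ω) c = c := min_eq_right hωc.le
          have hminf : min (f ω) c = f ω := min_eq_left (h3.trans hCc)
          rw [hminφ, hminf, abs_of_nonneg (by linarith : (0:ℝ) ≤ c - f ω),
            abs_of_nonneg (by linarith : (0:ℝ) ≤ φ n ω - f ω)]
          linarith
        · rw [indicator_of_notMem (show ω ∉ Fn from hωc)]
          push_neg at hωc
          rw [min_eq_left hωc, min_eq_left (h3.trans hCc)]
          simp
      have habs_int : Integrable (fun ω => |φ n ω - f ω|) ℙ := ((hφ_int n).sub hf_int).abs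
      have hrhs_int : Integrable
          (fun ω => |min (φ n ω) c - min (f ω) c| + Fn.indicator (φ n) ω) ℙ :=
        ((hφmin n).sub hfmin).abs.add ((hφ_int n).indicator hFn_meas)
      calc ∫ ω, |φ n ω - f ω| ∂ℙ
          ≤ ∫ ω, (|min (φ n ω) c - min (f ω) c| + Fn.indicator (φ n) ω) ∂ℙ :=
            integral_mono_ae habs_int hrhs_int hptwise
        _ = ∫ ω, |min (φ n ω) c - min (f ω) c| ∂ℙ + ∫ ω, Fn.indicator (φ n) ω ∂ℙ :=
            integral_add ((hφmin n).sub hfmin).abs ((hφ_int n).indicator hFn_meas)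
        _ ≤ ∫ ω, |min (φ n ω) c - min (f ω) c| ∂ℙ + 2 * ε' := by
            gcongr
            -- bound the indicator integral
            rw [integral_indicator hFn_meas]
            have e1 : ∫ ω in Fn, φ n ω ∂ℙ = ∫ ω in Fn, g ω ∂ℙ :=
              setIntegral_condExp ((hst n).measurableSpace_le_of_le (hle' n)) hg_int hFn_meas_n
            have e2 : ∫ ω in Fn, g ω ∂ℙ
                = ∫ ω in Fn, min (g ω) (k:ℝ) ∂ℙ + ∫ ω in Fn, (g ω - min (g ω) (k:ℝ)) ∂ℙ := by
              have := integral_sub (hg_int.integrableOn (s := Fn)) (hgk_int.integrableOn (s := Fn))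
              linarith
            have e3 : ∫ ω in Fn, (g ω - min (g ω) (k:ℝ)) ∂ℙ
                ≤ ∫ ω, (g ω - min (g ω) (k:ℝ)) ∂ℙ := by
              refine setIntegral_le_integral (hg_int.sub hgk_int) ?_
              exact Eventually.of_forall fun ω => by simp [min_le_left]
            have e4 : ∫ ω in Fn, min (g ω) (k:ℝ) ∂ℙ ≤ (k:ℝ) * (ℙ Fn).toReal := by
              calc ∫ ω in Fn, min (g ω) (k:ℝ) ∂ℙ ≤ ∫ _ω in Fn, (k:ℝ) ∂ℙ := by
                    refine setIntegral_mono_on hgk_int.integrableOn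
                      integrableOn_const hFn_meas
                      fun ω _ => min_le_right _ _
                _ = (ℙ Fn).toReal * (k:ℝ) := by rw [setIntegral_const, measureReal_def]; simp
                _ = (k:ℝ) * (ℙ Fn).toReal := mul_comm _ _
            have e5 : (ℙ Fn).toReal ≤ (∫ ω, g ω ∂ℙ) / c := by
              have hmark := mul_meas_ge_le_integral_of_nonneg (hφ_nonneg n) (hφ_int n) c
              have hsub : Fn ⊆ {ω | c ≤ φ n ω} := by
                intro ω hω
                simp only [hFn_def, mem_setOf_eq] at hω ⊢
                exact hω.le
              have hmono : (ℙ Fn).toReal ≤ (ℙ {ω | c ≤ φ n ω}).toReal :=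
                ENNReal.toReal_mono (measure_ne_top _ _) (measure_mono hsub)
              rw [le_div_iff₀ hc0]
              calc (ℙ Fn).toReal * c ≤ (ℙ {ω | c ≤ φ n ω}).toReal * c := by gcongr
                _ = c * (ℙ {ω | c ≤ φ n ω}).toReal := mul_comm _ _
                _ ≤ ∫ ω, φ n ω ∂ℙ := hmark
                _ = ∫ ω, g ω ∂ℙ := hφ_integral n
            have e6 : (k:ℝ) * (ℙ Fn).toReal ≤ (k:ℝ) * ((∫ ω, g ω ∂ℙ) / c) := by
              exact mul_le_mul_of_nonneg_left e5 (Nat.cast_nonneg k)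
            rw [e1, e2]
            have : (k:ℝ) * ((∫ ω, g ω ∂ℙ) / c) ≤ ε' := by
              rw [← mul_div_assoc]; exact hkc
            linarith [e3.trans hksmall.le, e4.trans (e6.trans this)]
    -- the truncated term tends to zero
    have hmins : Tendsto (fun n => ∫ ω, |min (φ n ω) c - min (f ω) c| ∂ℙ) atTop (𝓝 0) := by
      have := tendsto_integral_of_dominated_convergence (F := fun n ω => |min (φ n ω) c - min (f ω) c|)
        (f := fun _ => (0:ℝ)) (bound := fun _ => c)
        (fun n => ((hφmin n).sub hfmin).abs.1) (integrable_const c) ?_ ?_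
      · simpa using this
      · intro n
        filter_upwards [hφ_nonneg n, hf_nonneg] with ω h1 h2
        rw [Real.norm_eq_abs, abs_abs]
        have l1 : 0 ≤ min (φ n ω) c := le_min h1 hc0.le
        have l2 : 0 ≤ min (f ω) c := le_min h2 hc0.le
        have l3 : min (φ n ω) c ≤ c := min_le_right _ _
        have l4 : min (f ω) c ≤ c := min_le_right _ _
        rw [abs_le]
        constructor <;> linarith
      · filter_upwards [hφtend] with ω hω
        have : Tendsto (fun n => min (φ n ω) c) atTop (𝓝 (min (f ω) c)) :=
          hω.min tendsto_const_nhds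
        have h2 : Tendsto (fun _ : ℕ => min (f ω) c) atTop (𝓝 (min (f ω) c)) :=
          tendsto_const_nhds
        simpa using (this.sub h2).abs
    obtain ⟨N, hN⟩ := (Metric.tendsto_atTop.1 hmins) ε' hε'
    refine ⟨N, fun n hn => ?_⟩
    have h1 := htail n
    have h2 := hN n hn
    rw [Real.dist_eq, sub_zero] at h2 ⊢
    have h3 : 0 ≤ ∫ ω, |φ n ω - f ω| ∂ℙ := integral_nonneg fun ω => abs_nonneg _
    rw [abs_of_nonneg h3]
    have h4 : |∫ ω, |min (φ n ω) c - min (f ω) c| ∂ℙ| < ε' := h2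
    have h5 : ∫ ω, |min (φ n ω) c - min (f ω) c| ∂ℙ < ε' := (le_abs_self _).trans_lt h4
    have : ε' * 4 = ε := by rw [hε'_def]; ring
    linarith
  -- conclude
  have htt : Tendsto (fun n => ∫ ω in E, φ n ω ∂ℙ) atTop (𝓝 (∫ ω in E, f ω ∂ℙ)) := by
    rw [tendsto_iff_dist_tendsto_zero]
    refine squeeze_zero (fun n => dist_nonneg) (fun n => ?_) hL1
    rw [Real.dist_eq, ← integral_sub ((hφ_int n).integrableOn) (hf_int.integrableOn)]
    calc |∫ ω in E, (φ n ω - f ω) ∂ℙ| ≤ ∫ ω in E, |φ n ω - f ω| ∂ℙ := by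
          simpa [Real.norm_eq_abs] using norm_integral_le_integral_norm (fun ω => φ n ω - f ω)
            (μ := ℙ.restrict E)
      _ ≤ ∫ ω, |φ n ω - f ω| ∂ℙ :=
          setIntegral_le_integral ((hφ_int n).sub hf_int).abs
            (Eventually.of_forall fun ω => abs_nonneg _)
  have hconst : Tendsto (fun _ : ℕ => ∫ ω in E, g ω ∂ℙ) atTop (𝓝 (∫ ω in E, f ω ∂ℙ)) := by
    refine htt.congr fun n => ?_
    rw [hInt n]
  exact tendsto_nhds_unique hconst tendsto_const_nhds

end ML

section Compare
variable (hT : 0 ≤ T) (hS : IsPosContMart ℙ ℱ S s₀ T)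
include hT hS

lemma hitA_le_hitB {A B : ℝ} (hAB : A ≤ B) (ω : Ω) :
    hittingBtwn S (Ici A) 0 T ω ≤ hittingBtwn S (Ici B) 0 T ω := by
  by_cases hω : ω ∈ hitEvent S B T
  · obtain ⟨hmem, hval⟩ := hitting_mem' hT hS ⟨hT, le_rfl⟩ hω
    exact hittingBtwn_le_of_mem hmem.1 hmem.2 (mem_Ici.2 (hAB.trans hval))
  · rw [hitting_eq_of_not_mem hω]
    exact hittingBtwn_le ω

lemma hitA_gt {A T' : ℝ} (hT'T : T' ≤ T) {ω : Ω} (hE : ω ∈ hitEvent S A T)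
    (hE' : ω ∉ hitEvent S A T') : T' < hittingBtwn S (Ici A) 0 T ω := by
  by_contra h
  push_neg at h
  obtain ⟨hmem, hval⟩ := hitting_mem' hT hS ⟨hT, le_rfl⟩ hE
  exact hE' ⟨_, ⟨hmem.1, h⟩, hval⟩

lemma hitB_eq_of_mem {B T' : ℝ} (hT'0 : 0 ≤ T') (hT'T : T' ≤ T) {ω : Ω}
    (hω : ω ∈ hitEvent S B T') :
    hittingBtwn S (Ici B) 0 T' ω = hittingBtwn S (Ici B) 0 T ω := by
  obtain ⟨hmem', hval'⟩ := hitting_mem' hT hS ⟨hT'0, hT'T⟩ hω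
  have h1 : hittingBtwn S (Ici B) 0 T ω ≤ hittingBtwn S (Ici B) 0 T' ω :=
    hittingBtwn_le_of_mem hmem'.1 (hmem'.2.trans hT'T) (mem_Ici.2 hval')
  have hωT : ω ∈ hitEvent S B T := hitEvent_mono hT'T hω
  obtain ⟨hmem, hval⟩ := hitting_mem' hT hS ⟨hT, le_rfl⟩ hωT
  have h2 : hittingBtwn S (Ici B) 0 T' ω ≤ hittingBtwn S (Ici B) 0 T ω :=
    hittingBtwn_le_of_mem hmem.1 (h1.trans (hmem'.2)) (mem_Ici.2 hval)
  exact le_antisymm h2 h1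

lemma hitB_gt {B T' : ℝ} (hT'T : T' < T) {ω : Ω} (hω : ω ∉ hitEvent S B T') :
    T' < hittingBtwn S (Ici B) 0 T ω := by
  by_contra h
  push_neg at h
  by_cases hωT : ω ∈ hitEvent S B T
  · obtain ⟨hmem, hval⟩ := hitting_mem' hT hS ⟨hT, le_rfl⟩ hωT
    exact hω ⟨_, ⟨hmem.1, h⟩, hval⟩
  · rw [hitting_eq_of_not_mem hωT] at h
    exact absurd h (not_le.2 hT'T)

/-- a.e. the process stays `≤ L` up to (and including) the hitting time of `Ici L`. -/
lemma ae_le_at_hit {L t' : ℝ} (ht' : t' ∈ Icc (0:ℝ) T) (hs₀L : s₀ < L) :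
    ∀ᵐ ω ∂ℙ, ∀ u, 0 ≤ u → u ≤ hittingBtwn S (Ici L) 0 t' ω → S u ω ≤ L := by
  filter_upwards [hS.init] with ω h0 u hu0 hu
  rcases lt_or_eq_of_le hu with hlt | heq
  · have := notMem_of_lt_hittingBtwn hlt hu0
    simpa [mem_Ici] using le_of_not_ge (by simpa [mem_Ici] using this)
  · rcases lt_or_eq_of_le (le_hittingBtwn ht'.1 ω : (0:ℝ) ≤ hittingBtwn S (Ici L) 0 t' ω) with hpos | hzero
    · rw [heq]
      exact S_hitting_le hT hS ht' hpos
    · rw [heq, ← hzero, h0]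
      exact hs₀L.le
end Compare

section Members
variable (hT : 0 < T) (hS : IsPosContMart ℙ ℱ S s₀ T)
include hT hS

/-- Membership in the σ-algebra of a stopping time, for sets that are
`ℱ t₀`-measurable and included in `{t₀ < τ}`. -/
lemma mem_stop_of_subset {τ : Ω → ℝ} (hτ : IsStoppingTime (cF ℱ T) (wt τ)) {G : Set Ω} {t₀ : ℝ}
    (ht₀ : t₀ ∈ Icc (0:ℝ) T) (hG : MeasurableSet[ℱ t₀] G) (hsub : G ⊆ {ω | t₀ < τ ω}) :
    MeasurableSet[hτ.measurableSpace] G := by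
  rw [IsStoppingTime.measurableSet]
  refine ⟨?_, fun t => ?_⟩
  · exact (le_iSup (fun t => (cF ℱ T) t) t₀) G (by rw [cF_eq ht₀]; exact hG)
  simp only [wt, WithTop.coe_le_coe]
  rcases le_or_gt t t₀ with ht | ht
  · have : G ∩ {ω | τ ω ≤ t} = ∅ := by
      ext ω
      simp only [mem_inter_iff, mem_setOf_eq, mem_empty_iff_false, iff_false, not_and, not_le]
      exact fun hωG => lt_of_le_of_lt ht (hsub hωG)
    rw [this]
    exact @MeasurableSet.empty _ (cF ℱ T t)
  · refine MeasurableSet.inter ?_ (wt_st hτ t)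
    have hle : ℱ t₀ ≤ cF ℱ T t := by
      rw [cF_apply]
      refine ℱ.mono ?_
      rcases le_or_gt t T with h | h
      · rw [clamp, min_eq_left h]
        exact le_max_of_le_right ht.le
      · rw [clamp, min_eq_right h.le]
        exact le_max_of_le_right ht₀.2
    exact hle _ hG

/-- The set `hitEvent S A T \ hitEvent S A T'` is measurable for the σ-algebra
of any stopping time dominating the hitting time of `A`. -/
lemma D_mem_stop {A T' : ℝ} (hT'0 : 0 ≤ T') (hT'T : T' < T) {τ : Ω → ℝ}
    (hτ : IsStoppingTime (cF ℱ T) (wt τ)) (hτ0 : ∀ ω, 0 ≤ τ ω)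
    (hτA : ∀ ω, ω ∈ hitEvent S A T → hittingBtwn S (Ici A) 0 T ω ≤ τ ω) :
    MeasurableSet[hτ.measurableSpace] (hitEvent S A T \ hitEvent S A T') := by
  rw [IsStoppingTime.measurableSet]
  refine ⟨?_, fun t => ?_⟩
  · refine (le_iSup (fun t => (cF ℱ T) t) T) _ ?_
    rw [cF_eq ⟨hT.le, le_rfl⟩]
    exact (hitEvent_mble hT.le hS ⟨hT.le, le_rfl⟩).diff
      ((ℱ.mono hT'T.le) _ (hitEvent_mble hT.le hS ⟨hT'0, hT'T.le⟩))
  simp only [wt, WithTop.coe_le_coe]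
  have hkey : ∀ ω, ω ∈ hitEvent S A T → τ ω ≤ t → ω ∈ hitEvent S A (min t T) := by
    intro ω hωE hτt
    obtain ⟨hmem, hval⟩ := hitting_mem' hT.le hS ⟨hT.le, le_rfl⟩ hωE
    exact ⟨_, ⟨hmem.1, le_min ((hτA ω hωE).trans hτt) hmem.2⟩, hval⟩
  rcases le_or_gt t T' with ht | ht
  · have : (hitEvent S A T \ hitEvent S A T') ∩ {ω | τ ω ≤ t} = ∅ := by
      ext ω
      simp only [mem_inter_iff, mem_diff, mem_setOf_eq, mem_empty_iff_false, iff_false,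
        not_and, and_imp]
      intro hωE hωE' hτt
      exact hωE' (hitEvent_mono ((min_le_left t T).trans ht) (hkey ω hωE hτt))
    rw [this]
    exact @MeasurableSet.empty _ (cF ℱ T t)
  · have heq : (hitEvent S A T \ hitEvent S A T') ∩ {ω | τ ω ≤ t}
        = (hitEvent S A (min t T) ∩ (hitEvent S A T')ᶜ) ∩ {ω | τ ω ≤ t} := by
      ext ω
      simp only [mem_inter_iff, mem_diff, mem_compl_iff, and_assoc]
      constructor
      · rintro ⟨h1, h2, h3⟩
        exact ⟨hkey ω h1 h3, h2, h3⟩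
      · rintro ⟨h1, h2, h3⟩
        exact ⟨hitEvent_mono (min_le_right t T) h1, h2, h3⟩
    rw [heq]
    have htmem : min t T ∈ Icc (0:ℝ) T := ⟨le_min (hT'0.trans ht.le) hT.le, min_le_right _ _⟩
    have h1 : MeasurableSet[cF ℱ T t] (hitEvent S A (min t T)) := by
      have := hitEvent_mble hT.le hS htmem (L := A)
      have hle : ℱ (min t T) ≤ cF ℱ T t := by
        rw [cF_apply, clamp]
        exact ℱ.mono (le_max_right _ _)
      exact hle _ this
    have h2 : MeasurableSet[cF ℱ T t] (hitEvent S A T')ᶜ := by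
      have := hitEvent_mble hT.le hS ⟨hT'0, hT'T.le⟩ (L := A)
      have hle : ℱ T' ≤ cF ℱ T t := by
        rw [cF_apply, clamp]
        exact ℱ.mono (le_max_of_le_right (le_min ht.le hT'T.le))
      exact (hle _ this).compl
    exact (h1.inter h2).inter (wt_st hτ t)

end Members

section Final
variable (hT : 0 < T) (hS : IsPosContMart ℙ ℱ S s₀ T)
include hT hS

omit hT hS in
lemma stopVal_eq {B t' : ℝ} (ht'0 : 0 ≤ t') (ht'T : t' ≤ T) :
    stopVal S B t' = stoppedValue (cS S T) (wt (hittingBtwn S (Ici B) 0 t')) := by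
  funext ω
  show S _ ω = S (clamp T (hittingBtwn S (Ici B) 0 t' ω)) ω
  rw [clamp_of_mem ⟨le_hittingBtwn ht'0 ω, (hittingBtwn_le ω).trans ht'T⟩]

lemma integrand_integrable {τ : Ω → ℝ} (hτ : IsStoppingTime (cF ℱ T) (wt τ)) (hτT : ∀ ω, τ ω ≤ T)
    {C : ℝ} (x : ℝ) (hbd : ∀ᵐ ω ∂ℙ, stoppedValue (cS S T) (wt τ) ω ≤ C) :
    Integrable (fun ω => max (stoppedValue (cS S T) (wt τ) ω - x) 0) ℙ := by
  have hsm : StronglyMeasurable (fun ω => max (stoppedValue (cS S T) (wt τ) ω - x) 0) :=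
    (((stronglyMeasurable_stoppedValue_of_le (cS_prog hT.le hS) hτ
      (fun ω => WithTop.coe_le_coe.2 (hτT ω))).mono
      ((cF ℱ T).le T)).sub stronglyMeasurable_const).sup stronglyMeasurable_const
  refine Integrable.mono' (integrable_const (max (C - x) 0)) hsm.aestronglyMeasurable ?_
  filter_upwards [hbd] with ω h
  rw [Real.norm_eq_abs, abs_of_nonneg (le_max_right _ _)]
  exact max_le_max (by linarith) le_rfl

lemma sv_integrable {τ : Ω → ℝ} (hτ : IsStoppingTime (cF ℱ T) (wt τ)) (hτT : ∀ ω, τ ω ≤ T)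
    {C : ℝ} (hbd : ∀ᵐ ω ∂ℙ, stoppedValue (cS S T) (wt τ) ω ≤ C) :
    Integrable (stoppedValue (cS S T) (wt τ)) ℙ := by
  have hsm : StronglyMeasurable (stoppedValue (cS S T) (wt τ)) :=
    (stronglyMeasurable_stoppedValue_of_le (cS_prog hT.le hS) hτ (fun ω => WithTop.coe_le_coe.2 (hτT ω))).mono ((cF ℱ T).le T)
  refine Integrable.mono' (integrable_const (max C 0)) hsm.aestronglyMeasurable ?_
  filter_upwards [hbd, cS_ae_nonneg hT.le hS] with ω h h2
  have h3 : (0:ℝ) ≤ stoppedValue (cS S T) (wt τ) ω := h2 (τ ω)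
  rw [Real.norm_eq_abs, abs_of_nonneg h3]
  exact h.trans (le_max_left _ _)

lemma mart_setIntegral {t' : ℝ} (ht' : t' ∈ Icc (0:ℝ) T) {G : Set Ω}
    (hG : MeasurableSet[ℱ t'] G) :
    ∫ ω in G, S T ω ∂ℙ = ∫ ω in G, S t' ω ∂ℙ := by
  have h1 : ∫ ω in G, (ℙ[S T|ℱ t']) ω ∂ℙ = ∫ ω in G, S T ω ∂ℙ :=
    setIntegral_condExp (ℱ.le t') (hS.integrable T ⟨hT.le, le_rfl⟩) hG
  have h2 : ∫ ω in G, (ℙ[S T|ℱ t']) ω ∂ℙ = ∫ ω in G, S t' ω ∂ℙ := by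
    refine setIntegral_congr_ae (ℱ.le t' _ hG) ?_
    filter_upwards [hS.mart t' T ht' ⟨hT.le, le_rfl⟩ ht'.2] with ω h _
    exact h
  linarith

end Final

lemma sv_eq_S' {S : ℝ → Ω → ℝ} {T : ℝ} {τ : Ω → ℝ}
    (hτ0 : ∀ ω, 0 ≤ τ ω) (hτT : ∀ ω, τ ω ≤ T) (ω : Ω) :
    stoppedValue (cS S T) (wt τ) ω = S (τ ω) ω := by
  show S (clamp T (τ ω)) ω = S (τ ω) ω
  rw [clamp_of_mem ⟨hτ0 ω, hτT ω⟩]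


/-- For `0 ≤ T' ≤ T`, `s₀ ≤ A < B` and every `x`,
`E[1_{H_A ≤ T'}·(S_{T'∧H_B} − x)⁺] + (ℙ(H_A ≤ T) − ℙ(H_A ≤ T'))·(A − x)⁺
  ≤ E[1_{H_A ≤ T}·(S_{T∧H_B} − x)⁺]`. -/
theorem stmt_15 {Ω : Type} [mΩ : MeasurableSpace Ω] (ℙ : Measure Ω) [IsProbabilityMeasure ℙ]
    (ℱ : Filtration ℝ mΩ) (S : ℝ → Ω → ℝ) (s₀ T : ℝ) (hs₀ : 0 < s₀) (hT : 0 < T)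
    (hS : IsPosContMart ℙ ℱ S s₀ T) (T' : ℝ) (hT'0 : 0 ≤ T') (hT' : T' ≤ T)
    (A B : ℝ) (hA : s₀ ≤ A) (hAB : A < B) :
    ∀ x : ℝ,
      (∫ ω in hitEvent S A T', max (stopVal S B T' ω - x) 0 ∂ℙ)
          + ((ℙ (hitEvent S A T)).toReal - (ℙ (hitEvent S A T')).toReal) * max (A - x) 0
        ≤ ∫ ω in hitEvent S A T, max (stopVal S B T ω - x) 0 ∂ℙ := by
  intro x
  rcases eq_or_lt_of_le hT' with hTT | hT'T
  · subst hTT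
    simp
  have hmemT : T ∈ Icc (0:ℝ) T := ⟨hT.le, le_rfl⟩
  have hmemT' : T' ∈ Icc (0:ℝ) T := ⟨hT'0, hT'⟩
  have hs₀B : s₀ < B := lt_of_le_of_lt hA hAB
  rw [stopVal_eq (T := T) hT'0 hT', stopVal_eq (T := T) hT.le le_rfl]
  set ρ₂ : Ω → ℝ := hittingBtwn S (Ici B) 0 T with hρ₂def
  set ρ₁ : Ω → ℝ := hittingBtwn S (Ici B) 0 T' with hρ₁def
  set τA : Ω → ℝ := hittingBtwn S (Ici A) 0 T with hτAdef
  set ρA : Ω → ℝ := fun ω => min (τA ω) (ρ₂ ω) with hρAdef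
  set sv₂ : Ω → ℝ := stoppedValue (cS S T) (wt ρ₂) with hsv₂def
  set sv₁ : Ω → ℝ := stoppedValue (cS S T) (wt ρ₁) with hsv₁def
  set svA : Ω → ℝ := stoppedValue (cS S T) (wt ρA) with hsvAdef
  set E' : Set Ω := hitEvent S A T' with hE'def
  set E : Set Ω := hitEvent S A T with hEdef
  set Hb' : Set Ω := hitEvent S B T' with hHbdef
  set Fp : Set Ω := (E' \ Hb') ∩ {ω | x < S T' ω} with hFpdef
  set F₀ : Set Ω := (E' \ Hb') \ {ω | x < S T' ω} with hF0def
  set D : Set Ω := E \ E' with hDdef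
  set fR : Ω → ℝ := fun ω => max (sv₂ ω - x) 0 with hfRdef
  set fL : Ω → ℝ := fun ω => max (sv₁ ω - x) 0 with hfLdef
  -- stopping times
  have hρ₂st : IsStoppingTime (cF ℱ T) (wt ρ₂) := hitting_isST hT.le hS hT.le le_rfl
  have hρ₁st : IsStoppingTime (cF ℱ T) (wt ρ₁) := hitting_isST hT.le hS hT'0 hT'
  have hτAst : IsStoppingTime (cF ℱ T) (wt τA) := hitting_isST hT.le hS hT.le le_rfl
  have hρAst : IsStoppingTime (cF ℱ T) (wt ρA) := by
    have hwt : wt ρA = fun ω => min (wt τA ω) (wt ρ₂ ω) :=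
      funext fun ω => WithTop.coe_min (τA ω) (ρ₂ ω)
    rw [hwt]
    exact hτAst.min hρ₂st
  -- bounds on the stopping times
  have hρ₂0 : ∀ ω, 0 ≤ ρ₂ ω := fun ω => le_hittingBtwn hT.le ω
  have hρ₂T : ∀ ω, ρ₂ ω ≤ T := fun ω => hittingBtwn_le ω
  have hρ₁0 : ∀ ω, 0 ≤ ρ₁ ω := fun ω => le_hittingBtwn hT'0 ω
  have hρ₁T : ∀ ω, ρ₁ ω ≤ T := fun ω => (hittingBtwn_le ω).trans hT'
  have hρA0 : ∀ ω, 0 ≤ ρA ω := fun ω => le_min (le_hittingBtwn hT.le ω) (le_hittingBtwn hT.le ω)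
  have hρAT : ∀ ω, ρA ω ≤ T := fun ω => (min_le_right _ _).trans (hittingBtwn_le ω)
  have hτAρ₂ : ∀ ω, τA ω ≤ ρ₂ ω := fun ω => hitA_le_hitB hT.le hS hAB.le ω
  -- pointwise expressions of stopped values
  have hsv₂e : ∀ ω, sv₂ ω = S (ρ₂ ω) ω := sv_eq_S' hρ₂0 hρ₂T
  have hsv₁e : ∀ ω, sv₁ ω = S (ρ₁ ω) ω := sv_eq_S' hρ₁0 hρ₁T
  have hsvAe : ∀ ω, svA ω = S (ρA ω) ω := sv_eq_S' hρA0 hρAT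
  -- a.e. bounds
  have hbd₂ : ∀ᵐ ω ∂ℙ, sv₂ ω ≤ B := by
    filter_upwards [ae_le_at_hit hT.le hS hmemT hs₀B] with ω h
    rw [hsv₂e ω]
    exact h _ (hρ₂0 ω) le_rfl
  have hbd₁ : ∀ᵐ ω ∂ℙ, sv₁ ω ≤ B := by
    filter_upwards [ae_le_at_hit hT.le hS hmemT' hs₀B] with ω h
    rw [hsv₁e ω]
    exact h _ (hρ₁0 ω) le_rfl
  have hbdA : ∀ᵐ ω ∂ℙ, svA ω ≤ B := by
    filter_upwards [ae_le_at_hit hT.le hS hmemT hs₀B] with ω h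
    rw [hsvAe ω]
    exact h _ (hρA0 ω) (min_le_right _ _)
  -- measurability
  have hE'm' : MeasurableSet[ℱ T'] E' := hitEvent_mble hT.le hS hmemT'
  have hE'm : MeasurableSet E' := ℱ.le T' _ hE'm'
  have hEmm : MeasurableSet E := ℱ.le T _ (hitEvent_mble hT.le hS hmemT)
  have hHb'm' : MeasurableSet[ℱ T'] Hb' := hitEvent_mble hT.le hS hmemT'
  have hHb'm : MeasurableSet Hb' := ℱ.le T' _ hHb'm'
  have hxm' : MeasurableSet[ℱ T'] {ω | x < S T' ω} :=
    (hS.adapted T' hmemT').measurable measurableSet_Ioi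
  have hxm : MeasurableSet {ω | x < S T' ω} := ℱ.le T' _ hxm'
  have hDm : MeasurableSet D := hEmm.diff hE'm
  have hFm : MeasurableSet (E' \ Hb') := hE'm.diff hHb'm
  have hFpm : MeasurableSet Fp := hFm.inter hxm
  have hF₀m : MeasurableSet F₀ := hFm.diff hxm
  have hEHm : MeasurableSet (E' ∩ Hb') := hE'm.inter hHb'm
  have hE'E : E' ⊆ E := hitEvent_mono hT'
  -- integrability
  have hfR : Integrable fR ℙ := integrand_integrable hT hS hρ₂st hρ₂T x hbd₂
  have hfL : Integrable fL ℙ := integrand_integrable hT hS hρ₁st hρ₁T x hbd₁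
  have hsv₂i : Integrable sv₂ ℙ := sv_integrable hT hS hρ₂st hρ₂T hbd₂
  have hST'i : Integrable (S T') ℙ := hS.integrable T' hmemT'
  -- optional sampling identities
  have hMLD₂ : ∫ ω in D, sv₂ ω ∂ℙ = ∫ ω in D, S T ω ∂ℙ :=
    ML hT hS hρ₂st hρ₂0 hρ₂T hbd₂
      (D_mem_stop hT hS hT'0 hT'T hρ₂st hρ₂0 (fun ω _ => hτAρ₂ ω))
  have hMLDA : ∫ ω in D, svA ω ∂ℙ = ∫ ω in D, S T ω ∂ℙ :=
    ML hT hS hρAst hρA0 hρAT hbdA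
      (D_mem_stop hT hS hT'0 hT'T hρAst hρA0 (fun ω _ => le_min le_rfl (hτAρ₂ ω)))
  have hFpmeas' : MeasurableSet[ℱ T'] Fp := (hE'm'.diff hHb'm').inter hxm'
  have hsubFp : Fp ⊆ {ω | T' < ρ₂ ω} := fun ω hω => hitB_gt hT.le hS hT'T hω.1.2
  have hMLFp : ∫ ω in Fp, sv₂ ω ∂ℙ = ∫ ω in Fp, S T ω ∂ℙ :=
    ML hT hS hρ₂st hρ₂0 hρ₂T hbd₂ (mem_stop_of_subset hT hS hρ₂st hmemT' hFpmeas' hsubFp)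
  -- pointwise identities on the pieces
  have hHb'eq : ∀ ω ∈ E' ∩ Hb', sv₁ ω = sv₂ ω := by
    intro ω hω
    rw [hsv₁e ω, hsv₂e ω, hρ₁def, hρ₂def, hitB_eq_of_mem hT.le hS hT'0 hT' hω.2]
  have hFeq : ∀ ω ∈ E' \ Hb', sv₁ ω = S T' ω := by
    intro ω hω
    rw [hsv₁e ω, hρ₁def, hitting_eq_of_not_mem hω.2]
  have hDeq : ∀ ω ∈ D, svA ω = A := by
    intro ω hω
    rw [hsvAe ω, hρAdef]
    simp only [min_eq_left (hτAρ₂ ω)]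
    refine le_antisymm ?_ ((hitting_mem' hT.le hS hmemT hω.1).2)
    exact S_hitting_le hT.le hS hmemT (hT'0.trans_lt (hitA_gt hT.le hS hT' hω.1 hω.2))
  -- integral splittings
  have hsplit : ∀ h : Ω → ℝ, Integrable h ℙ →
      ∫ ω in E', h ω ∂ℙ
        = ∫ ω in E' ∩ Hb', h ω ∂ℙ + ∫ ω in Fp, h ω ∂ℙ + ∫ ω in F₀, h ω ∂ℙ := by
    intro h hh
    have h1 := setIntegral_union (f := h) (μ := ℙ) (s := E' ∩ Hb') (t := E' \ Hb')
      (disjoint_sdiff_self_right.mono_left inter_subset_right) hFm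
      hh.integrableOn hh.integrableOn
    rw [inter_union_diff] at h1
    have h2 := setIntegral_union (f := h) (μ := ℙ) (s := Fp) (t := F₀)
      (disjoint_sdiff_self_right.mono_left inter_subset_right) hF₀m
      hh.integrableOn hh.integrableOn
    rw [inter_union_diff] at h2
    rw [h1, h2]
    ring
  have hsplitE : ∫ ω in E, fR ω ∂ℙ = ∫ ω in E', fR ω ∂ℙ + ∫ ω in D, fR ω ∂ℙ := by
    have h1 := setIntegral_union (f := fR) (μ := ℙ)
      disjoint_sdiff_self_right hDm hfR.integrableOn hfR.integrableOn
    rwa [union_diff_cancel hE'E] at h1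
  -- piecewise inequalities
  have c1 : ∫ ω in E' ∩ Hb', fL ω ∂ℙ = ∫ ω in E' ∩ Hb', fR ω ∂ℙ := by
    refine setIntegral_congr_fun hEHm fun ω hω => ?_
    show max (sv₁ ω - x) 0 = max (sv₂ ω - x) 0
    rw [hHb'eq ω hω]
  have c2 : ∫ ω in F₀, fL ω ∂ℙ = 0 := by
    have heq : EqOn fL (fun _ => (0:ℝ)) F₀ := by
      intro ω hω
      show max (sv₁ ω - x) 0 = 0
      rw [hFeq ω hω.1]
      exact max_eq_right (sub_nonpos.2 (le_of_not_gt hω.2))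
    rw [setIntegral_congr_fun hF₀m heq]
    simp
  have c3 : 0 ≤ ∫ ω in F₀, fR ω ∂ℙ := setIntegral_nonneg hF₀m fun ω _ => le_max_right _ _
  have c4 : ∫ ω in Fp, fL ω ∂ℙ = ∫ ω in Fp, sv₂ ω ∂ℙ - x * (ℙ Fp).toReal := by
    have heq : EqOn fL (fun ω => S T' ω - x) Fp := by
      intro ω hω
      show max (sv₁ ω - x) 0 = S T' ω - x
      rw [hFeq ω hω.1]
      exact max_eq_left (sub_nonneg.2 (le_of_lt hω.2))
    rw [setIntegral_congr_fun hFpm heq,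
      integral_sub hST'i.integrableOn (integrable_const x).integrableOn,
      setIntegral_const, measureReal_def, smul_eq_mul,
      ← mart_setIntegral hT hS hmemT' hFpmeas', ← hMLFp]
    ring
  have c5 : ∫ ω in Fp, sv₂ ω ∂ℙ - x * (ℙ Fp).toReal ≤ ∫ ω in Fp, fR ω ∂ℙ := by
    have h1 : ∫ ω in Fp, (sv₂ ω - x) ∂ℙ ≤ ∫ ω in Fp, fR ω ∂ℙ :=
      setIntegral_mono_on (hsv₂i.sub (integrable_const x)).integrableOn
        hfR.integrableOn hFpm fun ω _ => le_max_left _ _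
    rw [integral_sub hsv₂i.integrableOn (integrable_const x).integrableOn,
      setIntegral_const, measureReal_def, smul_eq_mul] at h1
    linarith
  have c6 : max (A - x) 0 * (ℙ D).toReal ≤ ∫ ω in D, fR ω ∂ℙ := by
    rcases le_or_gt A x with hAx | hxA
    · rw [max_eq_right (sub_nonpos.2 hAx), zero_mul]
      exact setIntegral_nonneg hDm fun ω _ => le_max_right _ _
    · rw [max_eq_left (sub_nonneg.2 hxA.le)]
      have e1 : ∫ ω in D, (sv₂ ω - x) ∂ℙ ≤ ∫ ω in D, fR ω ∂ℙ :=
        setIntegral_mono_on (hsv₂i.sub (integrable_const x)).integrableOn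
          hfR.integrableOn hDm fun ω _ => le_max_left _ _
      rw [integral_sub hsv₂i.integrableOn (integrable_const x).integrableOn,
        setIntegral_const, measureReal_def, smul_eq_mul] at e1
      have e2 : ∫ ω in D, svA ω ∂ℙ = (ℙ D).toReal * A := by
        rw [setIntegral_congr_fun hDm (fun ω hω => hDeq ω hω), setIntegral_const, measureReal_def, smul_eq_mul]
      have e3 : (A - x) * (ℙ D).toReal = (ℙ D).toReal * A - x * (ℙ D).toReal := by ring
      linarith [hMLD₂, hMLDA, e1, e2]
  -- measure identity
  have hμD : (ℙ D).toReal = (ℙ E).toReal - (ℙ E').toReal := by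
    rw [hDdef, measure_diff hE'E hE'm.nullMeasurableSet (measure_ne_top ℙ E'),
      ENNReal.toReal_sub_of_le (measure_mono hE'E) (measure_ne_top ℙ E)]
  have hcomm : ((ℙ E).toReal - (ℙ E').toReal) * max (A - x) 0
      = max (A - x) 0 * (ℙ D).toReal := by
    rw [hμD]; ring
  rw [hsplitE, hsplit fL hfL, hsplit fR hfR, hcomm]
  linarith
end
end

section
/- Let B > s₀. Then E[ S_T · 1_{M_T ≥ B} ] = B · ℙ(M_T ≥ B). -/
open MeasureTheory Set Filter

noncomputable section

/-- `S` is an adapted martingale on the time interval `[0,T]` with continuous sample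
paths, a.s. nonnegative values, and initial value `s₀`. -/
structure IsNonnegContMart {Ω : Type} [mΩ : MeasurableSpace Ω]
    (ℙ : Measure Ω) (ℱ : Filtration ℝ mΩ) (S : ℝ → Ω → ℝ) (s₀ T : ℝ) : Prop where
  adapted : ∀ t ∈ Icc (0:ℝ) T, StronglyMeasurable[ℱ t] (S t)
  integrable : ∀ t ∈ Icc (0:ℝ) T, Integrable (S t) ℙ
  mart : ∀ s t : ℝ, s ∈ Icc (0:ℝ) T → t ∈ Icc (0:ℝ) T → s ≤ t →
    ℙ[S t|ℱ s] =ᵐ[ℙ] S s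
  contPaths : ∀ ω, ContinuousOn (fun t => S t ω) (Icc (0:ℝ) T)
  nonneg : ∀ t ∈ Icc (0:ℝ) T, ∀ᵐ ω ∂ℙ, 0 ≤ S t ω
  init : ∀ᵐ ω ∂ℙ, S 0 ω = s₀

namespace Stmt16Aux

/-- dyadic grid point `k·T/2ⁿ`. -/
def gr (T : ℝ) (n k : ℕ) : ℝ := (k : ℝ) * T / 2 ^ n

lemma gr_mono {T : ℝ} (hT : 0 ≤ T) {n k k' : ℕ} (h : k ≤ k') : gr T n k ≤ gr T n k' := by
  unfold gr
  gcongr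


lemma gr_mem {T : ℝ} (hT : 0 < T) {n k : ℕ} (hk : k ≤ 2 ^ n) : gr T n k ∈ Icc 0 T := by
  constructor
  · unfold gr; positivity
  · unfold gr
    rw [div_le_iff₀ (by positivity : (0:ℝ) < 2 ^ n)]
    have h : (k : ℝ) ≤ 2 ^ n := by exact_mod_cast hk
    nlinarith

lemma exists_gr_mem {T : ℝ} (hT : 0 < T) {n : ℕ} {a b : ℝ} (ha : 0 ≤ a) (hb : b ≤ T)
    (hab : a + T / 2 ^ n ≤ b) : ∃ k ≤ 2 ^ n, gr T n k ∈ Icc a b := by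
  have h2 : (0:ℝ) < 2 ^ n := by positivity
  set k := ⌈a * 2 ^ n / T⌉₊ with hk
  have harg : 0 ≤ a * 2 ^ n / T := by positivity
  have h1 : a * 2 ^ n / T ≤ (k : ℝ) := Nat.le_ceil _
  have h2' : (k : ℝ) < a * 2 ^ n / T + 1 := Nat.ceil_lt_add_one harg
  have h4 : a * 2 ^ n + T ≤ b * 2 ^ n := by
    have := mul_le_mul_of_nonneg_right hab h2.le
    have he : (a + T / 2 ^ n) * 2 ^ n = a * 2 ^ n + T := by field_simp
    linarith [he ▸ this]
  have hga : a ≤ gr T n k := by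
    unfold gr
    rw [le_div_iff₀ h2]
    calc a * 2 ^ n = (a * 2 ^ n / T) * T := by field_simp
    _ ≤ (k : ℝ) * T := by nlinarith
  have hgb : gr T n k ≤ b := by
    unfold gr
    rw [div_le_iff₀ h2]
    have h5 : (k:ℝ) * T < (a * 2 ^ n / T + 1) * T := by nlinarith
    have h3 : (a * 2 ^ n / T + 1) * T = a * 2 ^ n + T := by field_simp
    nlinarith
  refine ⟨k, ?_, hga, hgb⟩
  have h6 : (k : ℝ) * T ≤ T * 2 ^ n := by
    have := hgb.trans hb
    unfold gr at this
    rw [div_le_iff₀ h2] at this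
    exact this
  have : (k : ℝ) ≤ 2 ^ n := by nlinarith
  exact_mod_cast this



/-- From continuity: around any strict-exceedance point there is a closed subinterval of
`[0,T]` of positive length, within distance `δ`-ish, on which `f > C`. -/
lemma exists_interval_gt {T C : ℝ} (hT : 0 < T) {f : ℝ → ℝ}
    (hf : ContinuousOn f (Icc 0 T)) {t : ℝ} (htm : t ∈ Icc 0 T) (hft : C < f t) {r₀ : ℝ}
    (hr₀ : 0 < r₀) :
    ∃ a b : ℝ, 0 ≤ a ∧ b ≤ T ∧ 0 < b - a ∧ Icc a b ⊆ Icc 0 T ∧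
      (∀ u ∈ Icc a b, C < f u) ∧ Icc a b ⊆ Icc (t - r₀) (t + r₀) := by
  have hc : ContinuousWithinAt f (Icc 0 T) t := hf.continuousWithinAt htm
  rw [Metric.continuousWithinAt_iff] at hc
  obtain ⟨δ, hδ, hδp⟩ := hc (f t - C) (by linarith)
  set r : ℝ := min (min (δ / 2) (r₀ / 2)) T with hr
  have hrpos : 0 < r := by
    apply lt_min (lt_min (by linarith) (by linarith)) hT
  have hrδ : r ≤ δ / 2 := le_trans (min_le_left _ _) (min_le_left _ _)
  have hrr₀ : r ≤ r₀ / 2 := le_trans (min_le_left _ _) (min_le_right _ _)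
  have hrT : r ≤ T := min_le_right _ _
  set a : ℝ := max (t - r / 2) 0 with ha
  set b : ℝ := min (t + r / 2) T with hb
  have hab : a + r / 2 ≤ b := by
    apply le_min
    · have h1 : a ≤ t := max_le (by linarith) htm.1
      linarith
    · apply add_le_of_le_sub_right
      apply max_le
      · linarith [htm.2]
      · linarith
  refine ⟨a, b, le_max_right _ _, min_le_right _ _, by linarith, ?_, ?_, ?_⟩
  · intro u hu
    exact ⟨le_trans (le_max_right _ _) hu.1, le_trans hu.2 (min_le_right _ _)⟩
  · intro u hu
    have humem : u ∈ Icc 0 T := ⟨le_trans (le_max_right _ _) hu.1, le_trans hu.2 (min_le_right _ _)⟩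
    have hdist : dist u t < δ := by
      rw [Real.dist_eq, abs_lt]
      have h1 : t - r / 2 ≤ u := le_trans (le_max_left _ _) hu.1
      have h2 : u ≤ t + r / 2 := le_trans hu.2 (min_le_left _ _)
      constructor <;> linarith
    have := hδp humem hdist
    rw [Real.dist_eq, abs_lt] at this
    linarith [this.1]
  · intro u hu
    have h1 : t - r / 2 ≤ u := le_trans (le_max_left _ _) hu.1
    have h2 : u ≤ t + r / 2 := le_trans hu.2 (min_le_left _ _)
    constructor <;> linarith



/-- For every `n` large enough, the first grid point where `f` exceeds `C` has value `≤ C + ε`. -/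
lemma hit_small {T : ℝ} (hT : 0 < T) {f : ℝ → ℝ} (hf : ContinuousOn f (Icc 0 T))
    {C : ℝ} (hf0 : f 0 < C) {ε : ℝ} (hε : 0 < ε) :
    ∀ᶠ n : ℕ in atTop, ∀ k ≤ 2 ^ n,
      C < f (gr T n k) → (∀ j < k, f (gr T n j) ≤ C) → f (gr T n k) ≤ C + ε := by
  by_cases hP : ∃ t ∈ Icc 0 T, C < f t
  swap
  · push_neg at hP
    filter_upwards with n
    intro k hk hhit _
    exact absurd hhit (not_lt.2 (hP _ (gr_mem hT hk)))
  -- the set of strict exceedance times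
  set P : Set ℝ := {t | t ∈ Icc 0 T ∧ C < f t} with hPdef
  have hPne : P.Nonempty := by obtain ⟨t, ht, hft⟩ := hP; exact ⟨t, ht, hft⟩
  have hPbd : BddBelow P := ⟨0, fun t ht => ht.1.1⟩
  set τ : ℝ := sInf P with hτdef
  obtain ⟨t₀, ht₀⟩ := hPne
  have hτ0 : 0 ≤ τ := le_csInf ⟨t₀, ht₀⟩ (fun t ht => ht.1.1)
  have hτT : τ ≤ T := le_trans (csInf_le hPbd ht₀) ht₀.1.2
  have hbelow : ∀ t, 0 ≤ t → t < τ → f t ≤ C := by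
    intro t ht0 htτ
    by_contra h
    push_neg at h
    have : t ∈ P := ⟨⟨ht0, le_trans htτ.le hτT⟩, h⟩
    exact absurd (csInf_le hPbd this) (not_le.2 htτ)
  have hfτ : f τ ≤ C := by
    rcases eq_or_lt_of_le hτ0 with h0 | h0
    · rw [← h0]; exact hf0.le
    · by_contra h
      push_neg at h
      have hc : ContinuousWithinAt f (Icc 0 T) τ := hf.continuousWithinAt ⟨hτ0, hτT⟩
      rw [Metric.continuousWithinAt_iff] at hc
      obtain ⟨δ, hδ, hδp⟩ := hc (f τ - C) (by linarith)
      set d : ℝ := min (δ / 2) (τ / 2) with hd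
      have hdpos : 0 < d := lt_min (by linarith) (by linarith)
      have hu0 : 0 ≤ τ - d := by
        have : d ≤ τ / 2 := min_le_right _ _
        linarith
      have humem : τ - d ∈ Icc 0 T := ⟨hu0, by linarith [hdpos]⟩
      have hdist : dist (τ - d) τ < δ := by
        rw [Real.dist_eq, abs_lt]
        have : d ≤ δ / 2 := min_le_left _ _
        constructor <;> linarith
      have := hδp humem hdist
      rw [Real.dist_eq, abs_lt] at this
      have hflt : C < f (τ - d) := by linarith [this.1]
      have := hbelow (τ - d) hu0 (by linarith)
      linarith
  -- continuity at τ, for tolerance ε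
  have hcτ : ContinuousWithinAt f (Icc 0 T) τ := hf.continuousWithinAt ⟨hτ0, hτT⟩
  rw [Metric.continuousWithinAt_iff] at hcτ
  obtain ⟨δ, hδ, hδp⟩ := hcτ ε hε
  -- a point of P close to τ
  obtain ⟨t₁, ht₁, ht₁δ⟩ := (csInf_lt_iff hPbd ⟨t₀, ht₀⟩).1
    (show sInf P < τ + δ / 4 by rw [← hτdef]; linarith)
  -- interval around t₁ where f > C
  obtain ⟨a, b, ha0, hbT, hba, hsub, hgt, hnear⟩ :=
    exists_interval_gt hT hf ht₁.1 ht₁.2 (show (0:ℝ) < δ / 4 by linarith)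
  -- eventually the mesh is below b - a
  have hmesh : Tendsto (fun n : ℕ => T / 2 ^ n) atTop (nhds 0) := by
    apply Tendsto.div_atTop tendsto_const_nhds
    exact tendsto_pow_atTop_atTop_of_one_lt one_lt_two
  filter_upwards [hmesh.eventually_lt_const hba] with n hn
  intro k hk hhit hleast
  obtain ⟨k', hk', hk'mem⟩ := exists_gr_mem hT ha0 hbT (by
    have h := hn
    set m : ℝ := T / 2 ^ n with hm
    linarith)
  have hfk' : C < f (gr T n k') := hgt _ hk'mem
  have hkk' : k ≤ k' := by
    by_contra h
    push_neg at h
    exact absurd hfk' (not_lt.2 (hleast k' h))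
  have hgr_le : gr T n k ≤ gr T n k' := by
    unfold gr; gcongr
  have hgrb : gr T n k' ≤ b := hk'mem.2
  have hb_near : b ≤ t₁ + δ / 4 := (hnear (right_mem_Icc.2 (by linarith))).2
  have hτgr : τ ≤ gr T n k := csInf_le hPbd ⟨gr_mem hT hk, hhit⟩
  have hgrm : gr T n k ∈ Icc 0 T := gr_mem hT hk
  have hdist : dist (gr T n k) τ < δ := by
    rw [Real.dist_eq, abs_lt]
    constructor <;> linarith
  have := hδp hgrm hdist
  rw [Real.dist_eq, abs_lt] at this
  linarith [this.2]



variable {Ω : Type}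

/-- event: grid index `k` is the first grid-`n` time where `S` strictly exceeds `C`. -/
def Ek (S : ℝ → Ω → ℝ) (T C : ℝ) (n k : ℕ) : Set Ω :=
  {ω | C < S (gr T n k) ω ∧ ∀ j < k, S (gr T n j) ω ≤ C}

/-- event: some grid-`n` value strictly exceeds `C`. -/
def An (S : ℝ → Ω → ℝ) (T C : ℝ) (n : ℕ) : Set Ω :=
  ⋃ k ∈ Finset.range (2 ^ n + 1), Ek S T C n k

/-- event: the (first) strict exceedance on grid `n` overshoots `C + ε`. -/
def Bn (S : ℝ → Ω → ℝ) (T C ε : ℝ) (n : ℕ) : Set Ω :=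
  ⋃ k ∈ Finset.range (2 ^ n + 1), (Ek S T C n k ∩ {ω | C + ε < S (gr T n k) ω})

/-- event: `S` strictly exceeds `C` at some time in `[0,T]`. -/
def Astrict (S : ℝ → Ω → ℝ) (T C : ℝ) : Set Ω :=
  {ω | ∃ t ∈ Icc 0 T, C < S t ω}

lemma Ek_disjoint (S : ℝ → Ω → ℝ) (T C : ℝ) (n : ℕ) :
    (↑(Finset.range (2 ^ n + 1)) : Set ℕ).Pairwise (Function.onFun Disjoint (Ek S T C n)) := by
  have key : ∀ k k' : ℕ, k < k' → Disjoint (Ek S T C n k) (Ek S T C n k') := by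
    intro k k' h
    rw [Set.disjoint_left]
    rintro ω ⟨hk1, _⟩ ⟨_, hk2'⟩
    exact absurd hk1 (not_lt.2 (hk2' k h))
  intro k _ k' _ hne
  rcases Nat.lt_or_ge k k' with h | h
  · exact key _ _ h
  · exact (key _ _ (by omega)).symm

lemma mem_An_iff {S : ℝ → Ω → ℝ} {T C : ℝ} {n : ℕ} {ω : Ω} :
    ω ∈ An S T C n ↔ ∃ k ≤ 2 ^ n, C < S (gr T n k) ω := by
  classical
  constructor
  · rintro hω
    simp only [An, Set.mem_iUnion, Finset.mem_range] at hω
    obtain ⟨k, hk, hmem⟩ := hω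
    exact ⟨k, by omega, hmem.1⟩
  · rintro ⟨k, hk, hCk⟩
    have hex : ∃ m, C < S (gr T n m) ω := ⟨k, hCk⟩
    set k₀ := Nat.find hex with hk₀
    have hk₀le : k₀ ≤ k := Nat.find_min' hex hCk
    simp only [An, Set.mem_iUnion, Finset.mem_range]
    refine ⟨k₀, by omega, Nat.find_spec hex, fun j hj => not_lt.1 (Nat.find_min hex hj)⟩

lemma An_subset_Astrict {S : ℝ → Ω → ℝ} {T C : ℝ} (hT : 0 < T) {n : ℕ} :
    An S T C n ⊆ Astrict S T C := by
  intro ω hω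
  obtain ⟨k, hk, hCk⟩ := mem_An_iff.1 hω
  exact ⟨gr T n k, gr_mem hT hk, hCk⟩

lemma An_mono {S : ℝ → Ω → ℝ} {T C : ℝ} (hT : 0 < T) : Monotone (An S T C) := by
  apply monotone_nat_of_le_succ
  intro n ω hω
  obtain ⟨k, hk, hCk⟩ := mem_An_iff.1 hω
  refine mem_An_iff.2 ⟨2 * k, by omega, ?_⟩
  have : gr T (n + 1) (2 * k) = gr T n k := by
    unfold gr
    push_cast
    ring
  rwa [this]

lemma Bn_subset_An {S : ℝ → Ω → ℝ} {T C ε : ℝ} {n : ℕ} : Bn S T C ε n ⊆ An S T C n := by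
  intro ω hω
  simp only [Bn, Set.mem_iUnion] at hω
  obtain ⟨k, hk, hmem, _⟩ := hω
  simp only [An, Set.mem_iUnion]
  exact ⟨k, hk, hmem⟩



/-- The strict event is the countable union of the grid events. -/
lemma Astrict_eq_iUnion {S : ℝ → Ω → ℝ} {T C : ℝ} (hT : 0 < T)
    (hcont : ∀ ω, ContinuousOn (fun t => S t ω) (Icc 0 T)) :
    Astrict S T C = ⋃ n, An S T C n := by
  ext ω
  constructor
  · rintro ⟨t, htm, hft⟩
    obtain ⟨a, b, ha0, hbT, hba, _, hgt, _⟩ :=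
      exists_interval_gt hT (hcont ω) htm hft (one_pos : (0:ℝ) < 1)
    have hmesh : Tendsto (fun n : ℕ => T / 2 ^ n) atTop (nhds 0) := by
      apply Tendsto.div_atTop tendsto_const_nhds
      exact tendsto_pow_atTop_atTop_of_one_lt one_lt_two
    obtain ⟨n, hn⟩ := (hmesh.eventually_lt_const hba).exists
    obtain ⟨k, hk, hkmem⟩ := exists_gr_mem hT ha0 hbT (by
      have h := hn
      set m : ℝ := T / 2 ^ n with hm
      linarith)
    exact Set.mem_iUnion.2 ⟨n, mem_An_iff.2 ⟨k, hk, hgt _ hkmem⟩⟩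
  · intro h
    obtain ⟨n, hn⟩ := Set.mem_iUnion.1 h
    exact An_subset_Astrict hT hn

section Measure

variable [mΩ : MeasurableSpace Ω] {ℙ : Measure Ω} [IsProbabilityMeasure ℙ]
  {ℱ : Filtration ℝ mΩ} {S : ℝ → Ω → ℝ} {s₀ T : ℝ}

lemma Ek_measurableSet (hT : 0 < T) (hS : IsNonnegContMart ℙ ℱ S s₀ T) {C : ℝ} {n k : ℕ}
    (hk : k ≤ 2 ^ n) : MeasurableSet[ℱ (gr T n k)] (Ek S T C n k) := by
  have hmeas : ∀ j, j ≤ k → Measurable[ℱ (gr T n k)] (S (gr T n j)) := fun j hj =>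
    (((hS.adapted _ (gr_mem hT (le_trans hj hk))).mono
      (ℱ.mono (gr_mono hT.le hj)))).measurable
  have heq : Ek S T C n k =
      {ω | C < S (gr T n k) ω} ∩ ⋂ j, ⋂ (_ : j < k), {ω | S (gr T n j) ω ≤ C} := by
    ext ω
    simp only [Ek, Set.mem_setOf_eq, Set.mem_inter_iff, Set.mem_iInter]
  rw [heq]
  exact (measurableSet_lt measurable_const (hmeas k le_rfl)).inter
    (MeasurableSet.iInter fun j => MeasurableSet.iInter fun hj =>
      measurableSet_le (hmeas j hj.le) measurable_const)

lemma Ek_measurableSet' (hT : 0 < T) (hS : IsNonnegContMart ℙ ℱ S s₀ T) {C : ℝ} {n k : ℕ}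
    (hk : k ≤ 2 ^ n) : MeasurableSet (Ek S T C n k) :=
  ℱ.le _ _ (Ek_measurableSet hT hS hk)

lemma overshoot_measurableSet (hT : 0 < T) (hS : IsNonnegContMart ℙ ℱ S s₀ T) {C ε : ℝ}
    {n k : ℕ} (hk : k ≤ 2 ^ n) :
    MeasurableSet[ℱ (gr T n k)] (Ek S T C n k ∩ {ω | C + ε < S (gr T n k) ω}) :=
  (Ek_measurableSet hT hS hk).inter
    (measurableSet_lt measurable_const (hS.adapted _ (gr_mem hT hk)).measurable)

lemma An_measurableSet (hT : 0 < T) (hS : IsNonnegContMart ℙ ℱ S s₀ T) {C : ℝ} {n : ℕ} :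
    MeasurableSet (An S T C n) :=
  (Finset.range (2 ^ n + 1)).measurableSet_biUnion
    (fun k hk => Ek_measurableSet' hT hS (by simpa [Nat.lt_succ_iff] using hk))

lemma Bn_measurableSet (hT : 0 < T) (hS : IsNonnegContMart ℙ ℱ S s₀ T) {C ε : ℝ} {n : ℕ} :
    MeasurableSet (Bn S T C ε n) :=
  (Finset.range (2 ^ n + 1)).measurableSet_biUnion
    (fun k hk => ℱ.le _ _ (overshoot_measurableSet hT hS (by simpa [Nat.lt_succ_iff] using hk)))

lemma Astrict_measurableSet (hT : 0 < T) (hS : IsNonnegContMart ℙ ℱ S s₀ T) {C : ℝ} :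
    MeasurableSet (Astrict S T C) := by
  rw [Astrict_eq_iUnion hT hS.contPaths]
  exact MeasurableSet.iUnion fun n => An_measurableSet hT hS

/-- Martingale property for set integrals: for `F ∈ ℱ t`, `∫_F S_T = ∫_F S_t`. -/
lemma setIntegral_mart (hT : 0 < T) (hS : IsNonnegContMart ℙ ℱ S s₀ T) {t : ℝ}
    (ht : t ∈ Icc 0 T) {F : Set Ω} (hF : MeasurableSet[ℱ t] F) :
    ∫ ω in F, S T ω ∂ℙ = ∫ ω in F, S t ω ∂ℙ := by
  have hintT : Integrable (S T) ℙ := hS.integrable T ⟨hT.le, le_rfl⟩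
  rw [← setIntegral_condExp (ℱ.le t) hintT hF]
  exact setIntegral_congr_ae (ℱ.le t _ hF)
    ((hS.mart t T ht ⟨hT.le, le_rfl⟩ ht.2).mono fun ω h _ => h)

/-- Generic dominated-convergence lemma for set integrals along eventually-stabilizing sets. -/
lemma tendsto_setIntegral {A : ℕ → Set Ω} {L : Set Ω} (hA : ∀ n, MeasurableSet (A n))
    (hL : MeasurableSet L) {g : Ω → ℝ} (hg : Integrable g ℙ)
    (hmem : ∀ ω, ∀ᶠ n in atTop, (ω ∈ A n ↔ ω ∈ L)) :
    Tendsto (fun n => ∫ ω in A n, g ω ∂ℙ) atTop (nhds (∫ ω in L, g ω ∂ℙ)) := by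
  rw [← integral_indicator hL]
  have : ∀ n, ∫ ω in A n, g ω ∂ℙ = ∫ ω, (A n).indicator g ω ∂ℙ := fun n =>
    (integral_indicator (hA n)).symm
  simp_rw [this]
  apply tendsto_integral_of_dominated_convergence (fun ω => ‖g ω‖)
    (fun n => hg.aestronglyMeasurable.indicator (hA n)) hg.norm
  · exact fun n => Eventually.of_forall fun ω => norm_indicator_le_norm_self g ω
  · apply Eventually.of_forall
    intro ω
    apply tendsto_const_nhds.congr'
    filter_upwards [hmem ω] with n hn
    by_cases hω : ω ∈ L
    · rw [Set.indicator_of_mem hω, Set.indicator_of_mem (hn.2 hω)]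
    · rw [Set.indicator_of_notMem hω, Set.indicator_of_notMem (fun h => hω (hn.1 h))]

lemma tendsto_measure_toReal {A : ℕ → Set Ω} {L : Set Ω} (hA : ∀ n, MeasurableSet (A n))
    (hL : MeasurableSet L) (hmem : ∀ ω, ∀ᶠ n in atTop, (ω ∈ A n ↔ ω ∈ L)) :
    Tendsto (fun n => (ℙ (A n)).toReal) atTop (nhds (ℙ L).toReal) := by
  have := tendsto_setIntegral (ℙ := ℙ) hA hL (integrable_const (1:ℝ)) hmem
  simp [setIntegral_const] at this
  exact this

lemma eventually_mem_An {C : ℝ} (hT : 0 < T)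
    (hcont : ∀ ω, ContinuousOn (fun t => S t ω) (Icc 0 T)) (ω : Ω) :
    ∀ᶠ n in atTop, (ω ∈ An S T C n ↔ ω ∈ Astrict S T C) := by
  by_cases hω : ω ∈ Astrict S T C
  · have hex : ∃ n₀, ω ∈ An S T C n₀ := by
      have h := hω
      rw [Astrict_eq_iUnion hT hcont] at h
      exact Set.mem_iUnion.1 h
    obtain ⟨n₀, hn₀⟩ := hex
    filter_upwards [eventually_ge_atTop n₀] with n hn
    exact ⟨fun _ => hω, fun _ => An_mono hT hn hn₀⟩
  · filter_upwards with n
    exact ⟨fun h => absurd (An_subset_Astrict hT h) hω, fun h => absurd h hω⟩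

/-- **Key step**: the optional-stopping identity for the strict exceedance event. -/
lemma key_strict (ℙ : Measure Ω) [IsProbabilityMeasure ℙ] (ℱ : Filtration ℝ mΩ)
    (S : ℝ → Ω → ℝ) (s₀ T : ℝ) (hT : 0 < T) (hS : IsNonnegContMart ℙ ℱ S s₀ T)
    {C : ℝ} (hC0 : 0 < C) (hC : s₀ < C) :
    ∫ ω in Astrict S T C, S T ω ∂ℙ = C * (ℙ (Astrict S T C)).toReal := by
  have hTmem : T ∈ Icc (0:ℝ) T := ⟨hT.le, le_rfl⟩
  have hintT : Integrable (S T) ℙ := hS.integrable T hTmem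
  set I : ℝ := ∫ ω in Astrict S T C, S T ω ∂ℙ with hI
  set p : ℝ := (ℙ (Astrict S T C)).toReal with hp
  -- limits of the grid quantities
  have hlimI : Tendsto (fun n => ∫ ω in An S T C n, S T ω ∂ℙ) atTop (nhds I) :=
    tendsto_setIntegral (fun n => An_measurableSet hT hS) (Astrict_measurableSet hT hS)
      hintT (eventually_mem_An hT hS.contPaths)
  have hlimp : Tendsto (fun n => (ℙ (An S T C n)).toReal) atTop (nhds p) :=
    tendsto_measure_toReal (fun n => An_measurableSet hT hS) (Astrict_measurableSet hT hS)
      (eventually_mem_An hT hS.contPaths)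
  -- decomposition of the integral over `An` as a sum over first-hitting events
  have hdecomp : ∀ n, ∫ ω in An S T C n, S T ω ∂ℙ
      = ∑ k ∈ Finset.range (2 ^ n + 1), ∫ ω in Ek S T C n k, S T ω ∂ℙ := by
    intro n
    exact integral_biUnion_finset _ (fun k hk => Ek_measurableSet' hT hS
        (by simpa [Nat.lt_succ_iff] using hk))
      (Ek_disjoint S T C n) (fun k _ => hintT.integrableOn)
  have hstop : ∀ n, ∀ k ≤ 2 ^ n, ∫ ω in Ek S T C n k, S T ω ∂ℙ
      = ∫ ω in Ek S T C n k, S (gr T n k) ω ∂ℙ := fun n k hk =>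
    setIntegral_mart hT hS (gr_mem hT hk) (Ek_measurableSet hT hS hk)
  have hmeasEk : ∀ n, ∀ k ≤ 2 ^ n, ℙ (Ek S T C n k) ≠ ⊤ := fun n k _ => measure_ne_top _ _
  have hsum_meas : ∀ n, ∑ k ∈ Finset.range (2 ^ n + 1), (ℙ (Ek S T C n k)).toReal
      = (ℙ (An S T C n)).toReal := by
    intro n
    rw [show An S T C n = ⋃ k ∈ Finset.range (2 ^ n + 1), Ek S T C n k from rfl,
      measure_biUnion_finset (Ek_disjoint S T C n)
        (fun k hk => Ek_measurableSet' hT hS (by simpa [Nat.lt_succ_iff] using hk)),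
      ENNReal.toReal_sum (fun k _ => measure_ne_top _ _)]
  -- lower bound
  have hlow : ∀ n, C * (ℙ (An S T C n)).toReal ≤ ∫ ω in An S T C n, S T ω ∂ℙ := by
    intro n
    rw [hdecomp n, ← hsum_meas n, Finset.mul_sum]
    apply Finset.sum_le_sum
    intro k hk
    have hk' : k ≤ 2 ^ n := by simpa [Nat.lt_succ_iff] using hk
    rw [hstop n k hk']
    have h1 : ∫ ω in Ek S T C n k, (C : ℝ) ∂ℙ ≤ ∫ ω in Ek S T C n k, S (gr T n k) ω ∂ℙ := by
      apply setIntegral_mono_on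
      · exact (integrableOn_const_iff (by finiteness)).2 (Or.inr (measure_lt_top _ _))
      · exact (hS.integrable _ (gr_mem hT hk')).integrableOn
      · exact Ek_measurableSet' hT hS hk'
      · exact fun ω hω => hω.1.le
    rw [setIntegral_const, smul_eq_mul, mul_comm] at h1
    exact h1
  have hlowlim : C * p ≤ I :=
    le_of_tendsto_of_tendsto' (hlimp.const_mul C) hlimI hlow
  -- upper bound, for each ε > 0
  have hup : ∀ ε : ℝ, 0 < ε → I ≤ (C + ε) * p := by
    intro ε hε
    have hCε : (0:ℝ) ≤ C + ε := by linarith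
    -- the overshoot integral tends to 0
    have hβ : Tendsto (fun n => ∫ ω in Bn S T C ε n, S T ω ∂ℙ) atTop (nhds 0) := by
      have h0 : (0:ℝ) = ∫ ω, (0:ℝ) ∂ℙ := by simp
      rw [h0]
      have heq : ∀ n, ∫ ω in Bn S T C ε n, S T ω ∂ℙ
          = ∫ ω, (Bn S T C ε n).indicator (S T) ω ∂ℙ := fun n =>
        (integral_indicator (Bn_measurableSet hT hS)).symm
      simp_rw [heq]
      apply tendsto_integral_of_dominated_convergence (fun ω => ‖S T ω‖)
        (fun n => hintT.aestronglyMeasurable.indicator (Bn_measurableSet hT hS)) hintT.norm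
      · exact fun n => Eventually.of_forall fun ω => norm_indicator_le_norm_self _ ω
      · filter_upwards [hS.init] with ω hω
        have hf0 : S 0 ω < C := by rw [hω]; exact hC
        have hsmall := hit_small hT (hS.contPaths ω) hf0 hε
        apply tendsto_const_nhds.congr'
        filter_upwards [hsmall] with n hn
        symm
        apply Set.indicator_of_notMem
        intro hmem
        simp only [Bn, Set.mem_iUnion, Finset.mem_range] at hmem
        obtain ⟨k, hk, ⟨hhit, hleast⟩, hover⟩ := hmem
        exact absurd (hn k (by omega) hhit hleast) (not_le.2 hover)
    -- per-n upper bound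
    have hupn : ∀ n, ∫ ω in An S T C n, S T ω ∂ℙ
        ≤ (C + ε) * (ℙ (An S T C n)).toReal + ∫ ω in Bn S T C ε n, S T ω ∂ℙ := by
      intro n
      have hβdecomp : ∫ ω in Bn S T C ε n, S T ω ∂ℙ
          = ∑ k ∈ Finset.range (2 ^ n + 1),
              ∫ ω in Ek S T C n k ∩ {ω | C + ε < S (gr T n k) ω}, S T ω ∂ℙ := by
        apply integral_biUnion_finset _
          (fun k hk => ℱ.le _ _ (overshoot_measurableSet hT hS
            (by simpa [Nat.lt_succ_iff] using hk)))
          ?_ (fun k _ => hintT.integrableOn)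
        intro k hk k' hk' hne
        exact Disjoint.mono Set.inter_subset_left Set.inter_subset_left
          (Ek_disjoint S T C n hk hk' hne)
      rw [hdecomp n, hβdecomp, ← hsum_meas n, Finset.mul_sum, ← Finset.sum_add_distrib]
      apply Finset.sum_le_sum
      intro k hk
      have hk' : k ≤ 2 ^ n := by simpa [Nat.lt_succ_iff] using hk
      rw [hstop n k hk']
      set F1 : Set Ω := Ek S T C n k ∩ {ω | S (gr T n k) ω ≤ C + ε} with hF1
      set F2 : Set Ω := Ek S T C n k ∩ {ω | C + ε < S (gr T n k) ω} with hF2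
      have hsplit : Ek S T C n k = F1 ∪ F2 := by
        ext ω
        simp only [hF1, hF2, Set.mem_union, Set.mem_inter_iff, Set.mem_setOf_eq]
        constructor
        · intro h
          rcases le_or_gt (S (gr T n k) ω) (C + ε) with h' | h'
          · exact Or.inl ⟨h, h'⟩
          · exact Or.inr ⟨h, h'⟩
        · rintro (⟨h, _⟩ | ⟨h, _⟩) <;> exact h
      have hF2meas : MeasurableSet F2 := ℱ.le _ _ (overshoot_measurableSet hT hS hk')
      have hF1meas : MeasurableSet F1 :=
        (Ek_measurableSet' hT hS hk').inter
          (measurableSet_le ((hS.adapted _ (gr_mem hT hk')).mono (ℱ.le _)).measurable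
            measurable_const)
      have hdisj : Disjoint F1 F2 := by
        rw [Set.disjoint_left]
        rintro ω ⟨_, h1⟩ ⟨_, h2⟩
        simp only [Set.mem_setOf_eq] at h1 h2
        linarith
      have hintg : IntegrableOn (S (gr T n k)) (Ek S T C n k) ℙ :=
        (hS.integrable _ (gr_mem hT hk')).integrableOn
      have hEkint : ∫ ω in Ek S T C n k, S (gr T n k) ω ∂ℙ
          = ∫ ω in F1, S (gr T n k) ω ∂ℙ + ∫ ω in F2, S (gr T n k) ω ∂ℙ := by
        nth_rewrite 1 [hsplit]
        exact setIntegral_union hdisj hF2meas (hintg.mono_set Set.inter_subset_left)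
          (hintg.mono_set Set.inter_subset_left)
      rw [hEkint]
      have hb1 : ∫ ω in F1, S (gr T n k) ω ∂ℙ ≤ (C + ε) * (ℙ (Ek S T C n k)).toReal := by
        calc ∫ ω in F1, S (gr T n k) ω ∂ℙ ≤ ∫ ω in F1, (C + ε) ∂ℙ := by
              apply setIntegral_mono_on (hintg.mono_set Set.inter_subset_left)
                ((integrableOn_const_iff (by finiteness)).2 (Or.inr (measure_lt_top _ _))) hF1meas
              exact fun ω hω => hω.2
          _ = (ℙ F1).toReal * (C + ε) := by rw [setIntegral_const, smul_eq_mul, measureReal_def]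
          _ ≤ (ℙ (Ek S T C n k)).toReal * (C + ε) := by
              apply mul_le_mul_of_nonneg_right _ hCε
              exact ENNReal.toReal_mono (measure_ne_top _ _)
                (measure_mono Set.inter_subset_left)
          _ = (C + ε) * (ℙ (Ek S T C n k)).toReal := mul_comm _ _
      have hb2 : ∫ ω in F2, S (gr T n k) ω ∂ℙ = ∫ ω in F2, S T ω ∂ℙ :=
        (setIntegral_mart hT hS (gr_mem hT hk') (overshoot_measurableSet hT hS hk')).symm
      rw [hb2]
      exact add_le_add_left hb1 _
    have := le_of_tendsto_of_tendsto' hlimI (((hlimp.const_mul (C + ε)).add hβ)) hupn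
    simpa using this
  -- combine
  have hple1 : p ≤ 1 := by
    rw [hp]
    exact ENNReal.toReal_le_of_le_ofReal one_pos.le (by simpa using prob_le_one)
  have hpnn : 0 ≤ p := ENNReal.toReal_nonneg
  have : I ≤ C * p := by
    apply le_of_forall_pos_le_add
    intro ε hε
    calc I ≤ (C + ε) * p := hup ε hε
    _ = C * p + ε * p := by ring
    _ ≤ C * p + ε := by nlinarith
  linarith [hlowlim, this]

end Measure
end Stmt16Aux

open Stmt16Aux in
/-- For `B > s₀`, `E[S_T·1_{M_T ≥ B}] = B·ℙ(M_T ≥ B)`. -/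
theorem stmt_16 {Ω : Type} [mΩ : MeasurableSpace Ω] (ℙ : Measure Ω) [IsProbabilityMeasure ℙ]
    (ℱ : Filtration ℝ mΩ) (S : ℝ → Ω → ℝ) (s₀ T : ℝ) (hs₀ : 0 < s₀) (hT : 0 < T)
    (hS : IsNonnegContMart ℙ ℱ S s₀ T) (B : ℝ) (hB : s₀ < B) :
    (∫ ω in {ω | B ≤ runMax S T ω}, S T ω ∂ℙ)
      = B * (ℙ {ω | B ≤ runMax S T ω}).toReal := by
  have hTmem : T ∈ Icc (0:ℝ) T := ⟨hT.le, le_rfl⟩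
  have hintT : Integrable (S T) ℙ := hS.integrable T hTmem
  set Ck : ℕ → ℝ := fun k => B - 1 / ((k : ℝ) + 1) with hCk
  have hCklt : ∀ k, Ck k < B := by
    intro k
    have : (0:ℝ) < 1 / ((k : ℝ) + 1) := by positivity
    simp only [hCk]
    linarith
  have hCkmono : Monotone Ck := by
    intro k k' hkk'
    simp only [hCk]
    have h1 : (1:ℝ) / ((k' : ℝ) + 1) ≤ 1 / ((k : ℝ) + 1) := by
      apply one_div_le_one_div_of_le (by positivity)
      have : (k:ℝ) ≤ (k':ℝ) := Nat.cast_le.2 hkk'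
      linarith
    linarith
  -- the target event is the intersection of the strict events
  have hbdd : ∀ ω, BddAbove (Set.range fun t : Icc (0:ℝ) T => S (↑t) ω) := by
    intro ω
    have hcomp : IsCompact ((fun t => S t ω) '' Icc 0 T) :=
      isCompact_Icc.image_of_continuousOn (hS.contPaths ω)
    have hrange : Set.range (fun t : Icc (0:ℝ) T => S (↑t) ω)
        = (fun t => S t ω) '' Icc 0 T := by
      ext y
      constructor
      · rintro ⟨t, rfl⟩
        exact ⟨(t : ℝ), t.2, rfl⟩
      · rintro ⟨t, ht, rfl⟩
        exact ⟨⟨t, ht⟩, rfl⟩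
    rw [hrange]
    exact hcomp.bddAbove
  haveI hne : Nonempty (Icc (0:ℝ) T) := ⟨⟨0, le_rfl, hT.le⟩⟩
  have hGeq : {ω | B ≤ runMax S T ω} = ⋂ k : ℕ, Stmt16Aux.Astrict S T (Ck k) := by
    ext ω
    simp only [Set.mem_setOf_eq, Set.mem_iInter]
    constructor
    · intro hB' k
      have h1 : Ck k < runMax S T ω := lt_of_lt_of_le (hCklt k) hB'
      obtain ⟨t, ht⟩ := (lt_ciSup_iff (hbdd ω)).1 h1
      exact ⟨(t : ℝ), t.2, ht⟩
    · intro h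
      by_contra hlt
      push_neg at hlt
      obtain ⟨k, hk⟩ := exists_nat_one_div_lt (show 0 < B - runMax S T ω by linarith)
      obtain ⟨t, htm, hft⟩ := h k
      have hle : S t ω ≤ runMax S T ω := le_ciSup (hbdd ω) (⟨t, htm⟩ : Icc (0:ℝ) T)
      simp only [hCk] at hft
      linarith
  rw [hGeq]
  -- limits
  have hmeasA : ∀ k, MeasurableSet (Stmt16Aux.Astrict S T (Ck k)) :=
    fun k => Stmt16Aux.Astrict_measurableSet hT hS
  have hmeasG : MeasurableSet (⋂ k : ℕ, Stmt16Aux.Astrict S T (Ck k)) :=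
    MeasurableSet.iInter fun k => hmeasA k
  have hanti : Antitone (fun k => Stmt16Aux.Astrict S T (Ck k)) := by
    intro k k' hkk'
    rintro ω ⟨t, htm, hft⟩
    exact ⟨t, htm, lt_of_le_of_lt (by linarith [hCkmono hkk'] : Ck k ≤ Ck k') hft⟩
  have hmem : ∀ ω, ∀ᶠ k in atTop,
      (ω ∈ Stmt16Aux.Astrict S T (Ck k) ↔ ω ∈ ⋂ k : ℕ, Stmt16Aux.Astrict S T (Ck k)) := by
    intro ω
    by_cases hω : ω ∈ ⋂ k : ℕ, Stmt16Aux.Astrict S T (Ck k)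
    · filter_upwards with k
      exact ⟨fun _ => hω, fun _ => Set.mem_iInter.1 hω k⟩
    · have : ∃ k₀, ω ∉ Stmt16Aux.Astrict S T (Ck k₀) := by
        by_contra h
        push_neg at h
        exact hω (Set.mem_iInter.2 h)
      obtain ⟨k₀, hk₀⟩ := this
      filter_upwards [eventually_ge_atTop k₀] with k hk
      exact ⟨fun h => absurd (hanti hk h) hk₀, fun h => absurd h hω⟩
  have hlimI : Tendsto (fun k => ∫ ω in Stmt16Aux.Astrict S T (Ck k), S T ω ∂ℙ) atTop
      (nhds (∫ ω in ⋂ k : ℕ, Stmt16Aux.Astrict S T (Ck k), S T ω ∂ℙ)) :=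
    Stmt16Aux.tendsto_setIntegral hmeasA hmeasG hintT hmem
  have hlimp : Tendsto (fun k => (ℙ (Stmt16Aux.Astrict S T (Ck k))).toReal) atTop
      (nhds (ℙ (⋂ k : ℕ, Stmt16Aux.Astrict S T (Ck k))).toReal) :=
    Stmt16Aux.tendsto_measure_toReal hmeasA hmeasG hmem
  have hlimC : Tendsto Ck atTop (nhds B) := by
    rw [hCk]
    have h0 : Tendsto (fun k : ℕ => 1 / ((k:ℝ) + 1)) atTop (nhds 0) :=
      tendsto_one_div_add_atTop_nhds_zero_nat
    simpa using tendsto_const_nhds.sub h0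
  have hlimRHS : Tendsto (fun k => Ck k * (ℙ (Stmt16Aux.Astrict S T (Ck k))).toReal) atTop
      (nhds (B * (ℙ (⋂ k : ℕ, Stmt16Aux.Astrict S T (Ck k))).toReal)) := hlimC.mul hlimp
  -- eventual identity from the key lemma
  have heq : ∀ᶠ k in atTop,
      ∫ ω in Stmt16Aux.Astrict S T (Ck k), S T ω ∂ℙ
        = Ck k * (ℙ (Stmt16Aux.Astrict S T (Ck k))).toReal := by
    obtain ⟨k₀, hk₀⟩ := exists_nat_one_div_lt (show 0 < B - s₀ by linarith)
    filter_upwards [eventually_ge_atTop k₀] with k hk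
    have h1 : (1:ℝ) / ((k : ℝ) + 1) ≤ 1 / ((k₀ : ℝ) + 1) := by
      apply one_div_le_one_div_of_le (by positivity)
      have : (k₀:ℝ) ≤ (k:ℝ) := Nat.cast_le.2 hk
      linarith
    have hs₀Ck : s₀ < Ck k := by
      simp only [hCk]
      linarith
    exact Stmt16Aux.key_strict ℙ ℱ S s₀ T hT hS (lt_trans hs₀ hs₀Ck) hs₀Ck
  exact tendsto_nhds_unique (hlimI.congr' heq) hlimRHS
end
end

section
/- For all 0 ≤ m ≤ m': E[ S_T · 1_{M_T > m} ] · ℙ(M_T > m') ≤ E[ S_T · 1_{M_T > m'} ] · ℙ(M_T > m). Equivalently, the function d(m) := E[S_T | M_T > m] is nondecreasing on the set of m with ℙ(M_T > m) > 0. -/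
open MeasureTheory Set Filter
open scoped Topology

noncomputable section

/-- Discrete maximal-type inequality along a sorted list of times. -/
lemma discrete_max_ineq {Ω : Type} [mΩ : MeasurableSpace Ω] (ℙ : Measure Ω) [IsProbabilityMeasure ℙ]
    (ℱ : Filtration ℝ mΩ) (S : ℝ → Ω → ℝ) (T : ℝ)
    (hint : ∀ t ∈ Icc (0:ℝ) T, Integrable (S t) ℙ)
    (hmeas : ∀ t ∈ Icc (0:ℝ) T, StronglyMeasurable[ℱ t] (S t))
    (hmart : ∀ t ∈ Icc (0:ℝ) T, ∀ C : Set Ω, MeasurableSet[ℱ t] C →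
      ∫ ω in C, S T ω ∂ℙ = ∫ ω in C, S t ω ∂ℙ)
    (ε : ℝ) :
    ∀ (L : List ℝ), L.Pairwise (· ≤ ·) → (∀ t ∈ L, t ∈ Icc (0:ℝ) T) →
    ∀ (s : ℝ), s ∈ Icc (0:ℝ) T →
    ∀ (G : Set Ω), MeasurableSet[ℱ s] G → (∀ t ∈ L, s ≤ t) →
      ε * (ℙ (G ∩ {ω | ∃ t ∈ L, ε ≤ S t ω})).toReal
        ≤ ∫ ω in G ∩ {ω | ∃ t ∈ L, ε ≤ S t ω}, S T ω ∂ℙ := by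
  intro L
  induction L with
  | nil =>
    intro _ _ s hs G hG _
    simp
  | cons t L' ih =>
    intro hsort hmem s hs G hG hle
    have htIcc : t ∈ Icc (0:ℝ) T := hmem t (by simp)
    have hmt : Measurable (S t) := ((hmeas t htIcc).measurable).mono (ℱ.le t) le_rfl
    set E' : Set Ω := {ω | ∃ u ∈ L', ε ≤ S u ω} with hE'
    have hseteq : G ∩ {ω | ∃ u ∈ t :: L', ε ≤ S u ω}
        = (G ∩ {ω | ε ≤ S t ω}) ∪ ((G ∩ {ω | S t ω < ε}) ∩ E') := by
      ext ω
      simp only [mem_inter_iff, mem_union, mem_setOf_eq, List.mem_cons, hE']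
      constructor
      · rintro ⟨hg, u, hu | hu, hεu⟩
        · left; exact ⟨hg, hu ▸ hεu⟩
        · by_cases h : ε ≤ S t ω
          · left; exact ⟨hg, h⟩
          · right; exact ⟨⟨hg, lt_of_not_ge h⟩, u, hu, hεu⟩
      · rintro (⟨hg, h⟩ | ⟨⟨hg, _⟩, u, hu, hεu⟩)
        · exact ⟨hg, t, Or.inl rfl, h⟩
        · exact ⟨hg, u, Or.inr hu, hεu⟩
    have hGt : MeasurableSet[ℱ t] G := ℱ.mono (hle t (by simp)) _ hG
    have hC1meas : MeasurableSet[ℱ t] (G ∩ {ω | ε ≤ S t ω}) :=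
      hGt.inter (measurableSet_le measurable_const (hmeas t htIcc).measurable)
    have hG2meas : MeasurableSet[ℱ t] (G ∩ {ω | S t ω < ε}) :=
      hGt.inter (measurableSet_lt (hmeas t htIcc).measurable measurable_const)
    have hC1m : MeasurableSet (G ∩ {ω | ε ≤ S t ω}) := ℱ.le t _ hC1meas
    have hE'm : MeasurableSet ((G ∩ {ω | S t ω < ε}) ∩ E') := by
      apply (ℱ.le t _ hG2meas).inter
      have : E' = ⋃ u ∈ L', {ω | ε ≤ S u ω} := by ext ω; simp [hE']
      rw [this]
      exact MeasurableSet.biUnion (L'.finite_toSet.countable) fun u hu =>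
        measurableSet_le measurable_const
          (((hmeas u (hmem u (List.mem_cons_of_mem _ hu))).measurable).mono (ℱ.le u) le_rfl)
    have hdisj : Disjoint (G ∩ {ω | ε ≤ S t ω}) ((G ∩ {ω | S t ω < ε}) ∩ E') := by
      refine Set.disjoint_left.2 ?_
      rintro ω ⟨_, h1⟩ ⟨⟨_, h2⟩, _⟩
      simp only [mem_setOf_eq] at h1 h2
      exact (not_le.2 h2) h1
    have hintT : Integrable (S T) ℙ := hint T ⟨le_trans htIcc.1 htIcc.2, le_refl T⟩
    have hpart1 : ε * (ℙ (G ∩ {ω | ε ≤ S t ω})).toReal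
        ≤ ∫ ω in G ∩ {ω | ε ≤ S t ω}, S T ω ∂ℙ := by
      rw [hmart t htIcc _ hC1meas]
      refine setIntegral_ge_of_const_le_real hC1m (measure_ne_top ℙ _) ?_
        ((hint t htIcc).integrableOn)
      rintro ω ⟨_, h⟩
      exact h
    have hpart2 : ε * (ℙ ((G ∩ {ω | S t ω < ε}) ∩ E')).toReal
        ≤ ∫ ω in (G ∩ {ω | S t ω < ε}) ∩ E', S T ω ∂ℙ := by
      refine ih hsort.of_cons (fun u hu => hmem u (by simp [hu])) t htIcc _ hG2meas ?_
      intro u hu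
      exact (List.pairwise_cons.1 hsort).1 u hu
    rw [hseteq]
    rw [setIntegral_union hdisj hE'm hintT.integrableOn hintT.integrableOn,
      measure_union hdisj hE'm, ENNReal.toReal_add (measure_ne_top _ _) (measure_ne_top _ _),
      mul_add]
    exact add_le_add hpart1 hpart2

/-- A clamped enumeration of the rationals, giving a dense sequence in `[0, T]`. -/
def dfun (T : ℝ) (n : ℕ) : ℝ := min T (max 0 (((Denumerable.eqv ℚ).symm n : ℚ) : ℝ))

lemma dfun_mem {T : ℝ} (hT : 0 ≤ T) (n : ℕ) : dfun T n ∈ Icc (0:ℝ) T :=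
  ⟨le_min hT (le_max_left _ _), min_le_left _ _⟩

lemma dfun_dense {T t : ℝ} (ht : t ∈ Icc (0:ℝ) T) {δ : ℝ} (hδ : 0 < δ) :
    ∃ n, |dfun T n - t| < δ := by
  obtain ⟨q, hq1, hq2⟩ := exists_rat_btwn (show t - δ < t + δ by linarith)
  refine ⟨Denumerable.eqv ℚ q, ?_⟩
  rw [dfun, Equiv.symm_apply_apply, abs_sub_lt_iff]
  constructor
  · have h1 : max 0 (q:ℝ) < t + δ := max_lt (by linarith [ht.1]) hq2
    have h2 := min_le_right T (max 0 (q:ℝ))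
    linarith
  · have h1 : t - δ < min T (max 0 (q:ℝ)) :=
      lt_min (by linarith [ht.2]) (lt_of_lt_of_le hq1 (le_max_right _ _))
    linarith

lemma runMax_bddAbove {Ω : Type} {S : ℝ → Ω → ℝ} {T : ℝ}
    (hcont : ∀ ω, ContinuousOn (fun t => S t ω) (Icc (0:ℝ) T)) (ω : Ω) :
    BddAbove (Set.range fun t : Icc (0:ℝ) T => S t ω) := by
  have h : (fun t => S t ω) '' (Icc (0:ℝ) T) = Set.range fun t : Icc (0:ℝ) T => S t ω :=
    Set.image_eq_range _ _
  rw [← h]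
  exact (isCompact_Icc.image_of_continuousOn (hcont ω)).bddAbove

lemma le_runMax {Ω : Type} {S : ℝ → Ω → ℝ} {T : ℝ}
    (hcont : ∀ ω, ContinuousOn (fun t => S t ω) (Icc (0:ℝ) T)) (ω : Ω)
    {t : ℝ} (ht : t ∈ Icc (0:ℝ) T) : S t ω ≤ runMax S T ω :=
  le_ciSup (runMax_bddAbove hcont ω) (⟨t, ht⟩ : Icc (0:ℝ) T)

/-- The approximating events. -/
def Ej {Ω : Type} (S : ℝ → Ω → ℝ) (T c : ℝ) (j : ℕ) : Set Ω :=
  {ω | ∃ n < j, c + 1/((j:ℝ)+1) ≤ S (dfun T n) ω}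

lemma Ej_mono {Ω : Type} (S : ℝ → Ω → ℝ) (T c : ℝ) : Monotone (Ej S T c) := by
  intro j j' hjj ω hω
  obtain ⟨n, hn, h⟩ := hω
  refine ⟨n, lt_of_lt_of_le hn hjj, le_trans ?_ h⟩
  have h1 : 1/((j':ℝ)+1) ≤ 1/((j:ℝ)+1) := by
    apply one_div_le_one_div_of_le (by positivity)
    have : (j:ℝ) ≤ (j':ℝ) := by exact_mod_cast hjj
    linarith
  linarith

lemma Ej_measurable {Ω : Type} [mΩ : MeasurableSpace Ω] {ℱ : Filtration ℝ mΩ}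
    {S : ℝ → Ω → ℝ} {T : ℝ} (hT : 0 ≤ T)
    (hmeas : ∀ t ∈ Icc (0:ℝ) T, StronglyMeasurable[ℱ t] (S t)) (c : ℝ) (j : ℕ) :
    MeasurableSet (Ej S T c j) := by
  have : Ej S T c j = ⋃ n, ⋃ (_ : n < j), {ω | c + 1/((j:ℝ)+1) ≤ S (dfun T n) ω} := by
    ext ω; simp [Ej]
  rw [this]
  refine MeasurableSet.iUnion fun n => MeasurableSet.iUnion fun _ =>
    measurableSet_le measurable_const ?_
  exact ((hmeas _ (dfun_mem hT n)).measurable).mono (ℱ.le _) le_rfl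

lemma runMax_gt_eq_iUnion {Ω : Type} {S : ℝ → Ω → ℝ} {T : ℝ} (hT : 0 < T)
    (hcont : ∀ ω, ContinuousOn (fun t => S t ω) (Icc (0:ℝ) T)) (c : ℝ) :
    {ω | c < runMax S T ω} = ⋃ j : ℕ, Ej S T c j := by
  ext ω
  simp only [mem_setOf_eq, mem_iUnion]
  constructor
  · intro hc
    haveI : Nonempty (Icc (0:ℝ) T) := (Set.nonempty_Icc.2 hT.le).to_subtype
    obtain ⟨t, ht⟩ := exists_lt_of_lt_ciSup hc
    set η : ℝ := (S t.1 ω - c)/2 with hη_def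
    have hη : 0 < η := by
      simp only [hη_def]
      linarith [ht]
    obtain ⟨δ, hδ, hδP⟩ := Metric.continuousWithinAt_iff.1 ((hcont ω) t.1 t.2) η hη
    obtain ⟨n, hn⟩ := dfun_dense t.2 hδ
    have hdist : dist (S (dfun T n) ω) (S t.1 ω) < η :=
      hδP (dfun_mem hT.le n) (by rwa [Real.dist_eq])
    rw [Real.dist_eq] at hdist
    have habs := abs_sub_lt_iff.1 hdist
    obtain ⟨k, hk⟩ := exists_nat_one_div_lt hη
    refine ⟨max (n+1) k, n, lt_of_lt_of_le (Nat.lt_succ_self n) (le_max_left _ _), ?_⟩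
    have h1 : 1/(((max (n+1) k : ℕ) :ℝ)+1) ≤ 1/((k:ℝ)+1) := by
      apply one_div_le_one_div_of_le (by positivity)
      have : (k:ℝ) ≤ ((max (n+1) k : ℕ):ℝ) := by exact_mod_cast le_max_right (n+1) k
      linarith
    have h2 : S t.1 ω - η ≤ S (dfun T n) ω := by linarith [habs.2]
    have h3 : S t.1 ω - η = c + η := by simp only [hη_def]; ring
    linarith [hk]
  · rintro ⟨j, n, hn, h⟩
    have h1 : (0:ℝ) < 1/((j:ℝ)+1) := by positivity
    calc c < c + 1/((j:ℝ)+1) := by linarith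
    _ ≤ S (dfun T n) ω := h
    _ ≤ runMax S T ω := le_runMax hcont ω (dfun_mem hT.le n)

lemma runMax_gt_measurable {Ω : Type} [mΩ : MeasurableSpace Ω] {ℱ : Filtration ℝ mΩ}
    {S : ℝ → Ω → ℝ} {T : ℝ} (hT : 0 < T)
    (hmeas : ∀ t ∈ Icc (0:ℝ) T, StronglyMeasurable[ℱ t] (S t))
    (hcont : ∀ ω, ContinuousOn (fun t => S t ω) (Icc (0:ℝ) T)) (c : ℝ) :
    MeasurableSet {ω | c < runMax S T ω} := by
  rw [runMax_gt_eq_iUnion hT hcont c]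
  exact MeasurableSet.iUnion fun j => Ej_measurable hT.le hmeas c j

lemma lower_bound {Ω : Type} [mΩ : MeasurableSpace Ω] {ℙ : Measure Ω} [IsProbabilityMeasure ℙ]
    {ℱ : Filtration ℝ mΩ} {S : ℝ → Ω → ℝ} {s₀ T : ℝ} (hT : 0 < T)
    (hS : IsNonnegContMart ℙ ℱ S s₀ T) (c : ℝ) :
    c * (ℙ {ω | c < runMax S T ω}).toReal ≤ ∫ ω in {ω | c < runMax S T ω}, S T ω ∂ℙ := by
  have hTI : T ∈ Icc (0:ℝ) T := ⟨hT.le, le_rfl⟩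
  have hmartC : ∀ t ∈ Icc (0:ℝ) T, ∀ C : Set Ω, MeasurableSet[ℱ t] C →
      ∫ ω in C, S T ω ∂ℙ = ∫ ω in C, S t ω ∂ℙ := by
    intro t htI C hC
    rw [← setIntegral_condExp (ℱ.le t) (hS.integrable T hTI) hC]
    exact setIntegral_congr_ae (ℱ.le t _ hC)
      ((hS.mart t T htI hTI htI.2).mono fun ω h _ => h)
  -- per-j estimate
  have hperj : ∀ j : ℕ, c * (ℙ (Ej S T c j)).toReal ≤ ∫ ω in {ω | c < runMax S T ω}, S T ω ∂ℙ := by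
    intro j
    set ε : ℝ := c + 1/((j:ℝ)+1) with hε_def
    set L : List ℝ := Finset.sort ((Finset.range j).image (dfun T)) (· ≤ ·) with hL
    have hmemL : ∀ t ∈ L, ∃ n < j, dfun T n = t := by
      intro t htL
      have := (Finset.mem_sort (α := ℝ) (r := (· ≤ ·))).1 htL
      simpa [Finset.mem_image, Finset.mem_range] using this
    have hseteq : {ω | ∃ t ∈ L, ε ≤ S t ω} = Ej S T c j := by
      ext ω
      simp only [mem_setOf_eq, Ej]
      constructor
      · rintro ⟨t, htL, h⟩
        obtain ⟨n, hn, rfl⟩ := hmemL t htL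
        exact ⟨n, hn, h⟩
      · rintro ⟨n, hn, h⟩
        refine ⟨dfun T n, ?_, h⟩
        rw [hL, Finset.mem_sort]
        exact Finset.mem_image.2 ⟨n, Finset.mem_range.2 hn, rfl⟩
    have key := discrete_max_ineq ℙ ℱ S T hS.integrable hS.adapted hmartC ε L
      (Finset.pairwise_sort _ _) (fun t htL => by
        obtain ⟨n, _, rfl⟩ := hmemL t htL; exact dfun_mem hT.le n)
      0 ⟨le_rfl, hT.le⟩ Set.univ MeasurableSet.univ
      (fun t htL => by obtain ⟨n, _, rfl⟩ := hmemL t htL; exact (dfun_mem hT.le n).1)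
    rw [Set.univ_inter, hseteq] at key
    have hsub : Ej S T c j ⊆ {ω | c < runMax S T ω} := by
      rw [runMax_gt_eq_iUnion hT hS.contPaths c]
      exact subset_iUnion (Ej S T c) j
    have hεc : c ≤ ε := by
      have : (0:ℝ) < 1/((j:ℝ)+1) := by positivity
      simp only [hε_def]; linarith
    calc c * (ℙ (Ej S T c j)).toReal
        ≤ ε * (ℙ (Ej S T c j)).toReal :=
          mul_le_mul_of_nonneg_right hεc ENNReal.toReal_nonneg
      _ ≤ ∫ ω in Ej S T c j, S T ω ∂ℙ := key
      _ ≤ ∫ ω in {ω | c < runMax S T ω}, S T ω ∂ℙ := by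
          refine setIntegral_mono_set (hS.integrable T hTI).integrableOn
            (ae_restrict_of_ae (hS.nonneg T hTI)) (HasSubset.Subset.eventuallyLE hsub)
  -- limit
  have htend : Tendsto (fun j => ℙ (Ej S T c j)) atTop (𝓝 (ℙ {ω | c < runMax S T ω})) := by
    rw [runMax_gt_eq_iUnion hT hS.contPaths c]
    exact tendsto_measure_iUnion_atTop (Ej_mono S T c)
  have htend2 : Tendsto (fun j => c * (ℙ (Ej S T c j)).toReal) atTop
      (𝓝 (c * (ℙ {ω | c < runMax S T ω}).toReal)) :=
    ((ENNReal.tendsto_toReal (measure_ne_top ℙ _)).comp htend).const_mul c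
  exact le_of_tendsto htend2 (Eventually.of_forall hperj)

/-- For all `0 ≤ m ≤ m'`,
`E[S_T·1_{M_T > m}]·ℙ(M_T > m') ≤ E[S_T·1_{M_T > m'}]·ℙ(M_T > m)`; i.e. the function
`d(m) = E[S_T | M_T > m]` is nondecreasing (where defined). -/
theorem stmt_18 {Ω : Type} [mΩ : MeasurableSpace Ω] (ℙ : Measure Ω) [IsProbabilityMeasure ℙ]
    (ℱ : Filtration ℝ mΩ) (S : ℝ → Ω → ℝ) (s₀ T : ℝ) (hs₀ : 0 < s₀) (hT : 0 < T)
    (hS : IsNonnegContMart ℙ ℱ S s₀ T) :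
    ∀ m m' : ℝ, 0 ≤ m → m ≤ m' →
      (∫ ω in {ω | m < runMax S T ω}, S T ω ∂ℙ) * (ℙ {ω | m' < runMax S T ω}).toReal
        ≤ (∫ ω in {ω | m' < runMax S T ω}, S T ω ∂ℙ)
            * (ℙ {ω | m < runMax S T ω}).toReal := by
  intro m m' hm hmm'
  have hTI : T ∈ Icc (0:ℝ) T := ⟨hT.le, le_rfl⟩
  set A := {ω | m < runMax S T ω} with hA
  set B := {ω | m' < runMax S T ω} with hB
  have hAm : MeasurableSet A := runMax_gt_measurable hT hS.adapted hS.contPaths m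
  have hBm : MeasurableSet B := runMax_gt_measurable hT hS.adapted hS.contPaths m'
  have hBA : B ⊆ A := fun ω h => lt_of_le_of_lt hmm' h
  have hintT : Integrable (S T) ℙ := hS.integrable T hTI
  have hAeq : A = B ∪ (A \ B) := (Set.union_diff_cancel hBA).symm
  have hdisj : Disjoint B (A \ B) := Set.disjoint_sdiff_right
  set a := ∫ ω in A, S T ω ∂ℙ with ha
  set b := ∫ ω in B, S T ω ∂ℙ with hb
  set r := ∫ ω in A \ B, S T ω ∂ℙ with hr
  set p := (ℙ A).toReal with hp
  set q := (ℙ B).toReal with hq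
  have hsplit_int : a = b + r := by
    rw [ha, hAeq, setIntegral_union hdisj (hAm.diff hBm) hintT.integrableOn hintT.integrableOn]
  have hsplit_meas : p = q + (ℙ (A \ B)).toReal := by
    have h := measure_union (μ := ℙ) hdisj (hAm.diff hBm)
    rw [← hAeq] at h
    rw [hp, h, ENNReal.toReal_add (measure_ne_top _ _) (measure_ne_top _ _), hq]
  have hub : r ≤ m' * (ℙ (A \ B)).toReal := by
    have : r ≤ ∫ _ in A \ B, m' ∂ℙ := by
      refine setIntegral_mono_on hintT.integrableOn ((integrableOn_const_iff (by finiteness)).2 (Or.inr ?_))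
        (hAm.diff hBm) ?_
      · exact measure_lt_top ℙ _
      · intro ω hω
        have h1 : S T ω ≤ runMax S T ω := le_runMax hS.contPaths ω hTI
        have h2 : ¬ (m' < runMax S T ω) := hω.2
        push_neg at h2
        linarith
    rwa [setIntegral_const, smul_eq_mul, mul_comm] at this
  have hlb : m' * q ≤ b := lower_bound hT hS m'
  have hq0 : 0 ≤ q := ENNReal.toReal_nonneg
  have hpq : q ≤ p := by
    rw [hp, hq]
    exact ENNReal.toReal_mono (measure_ne_top _ _) (measure_mono hBA)
  have hPd : (ℙ (A \ B)).toReal = p - q := by linarith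
  rw [hPd] at hub
  -- a*q ≤ b*p
  show a * q ≤ b * p
  have h1 : r * q ≤ m' * (p - q) * q := mul_le_mul_of_nonneg_right hub hq0
  have h2 : m' * q * (p - q) ≤ b * (p - q) :=
    mul_le_mul_of_nonneg_right hlb (by linarith)
  nlinarith [h1, h2, hsplit_int]
end
end
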